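/- Let λ be a partition and δ a weak composition. Then the number of set-valued semistandard Young tableaux of shape λ and content δ equals Σ_{μ ⊇ λ} g_{λ,μ} · N_{μ,δ}, where the sum is over partitions μ containing λ, N_{μ,δ} is the number of (ordinary) semistandard Young tableaux of shape μ and content δ, and g_{λ,μ} is the number of fillings of the skew shape μ/λ with positive integers that strictly increase left to right along each row and strictly increase down each column, and in which every entry in row i lies in {1,…,i−1}. -/
import Mathlib


/-- `f : ℕ → ℕ` is a partition: weakly decreasing and eventually zero. Row `i : ℕ` is the
`(i+1)`-st row; its boxes are `(i, j)` with `0 ≤ j < f i`. -/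
def IsPartitionFn (f : ℕ → ℕ) : Prop :=
  (∀ a b : ℕ, a ≤ b → f b ≤ f a) ∧ ∃ N : ℕ, ∀ m : ℕ, N ≤ m → f m = 0

/-- A set-valued semistandard Young tableau of shape the partition `lam`: each box carries
a nonempty finite set of positive integers, rows weakly increase
(`max F(i,j) ≤ min F(i,j+1)`) and columns strictly increase (`max F(i,j) < min F(i+1,j)`). -/
structure SVYT (lam : ℕ → ℕ) where
  box : ℕ → ℕ → Finset ℕ
  nonempty : ∀ i j : ℕ, j < lam i → (box i j).Nonempty
  pos : ∀ i j : ℕ, ∀ e ∈ box i j, 1 ≤ e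
  outside : ∀ i j : ℕ, lam i ≤ j → box i j = ∅
  rows : ∀ i j : ℕ, j + 1 < lam i → ∀ a ∈ box i j, ∀ b ∈ box i (j + 1), a ≤ b
  cols : ∀ i j : ℕ, j < lam (i + 1) → ∀ a ∈ box i j, ∀ b ∈ box (i + 1) j, a < b

/-- The content of a set-valued tableau: the number of boxes whose set contains `v`. -/
noncomputable def SVYT.content {lam : ℕ → ℕ} (F : SVYT lam) (v : ℕ) : ℕ :=
  {p : ℕ × ℕ | p.2 < lam p.1 ∧ v ∈ F.box p.1 p.2}.ncard

/-- An ordinary semistandard Young tableau of shape the partition `mu`: one positive integer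
per box, rows weakly increasing, columns strictly increasing (entries outside the shape are
set to `0`). -/
structure SSYT (mu : ℕ → ℕ) where
  entry : ℕ → ℕ → ℕ
  pos : ∀ i j : ℕ, j < mu i → 1 ≤ entry i j
  outside : ∀ i j : ℕ, mu i ≤ j → entry i j = 0
  rows : ∀ i j : ℕ, j + 1 < mu i → entry i j ≤ entry i (j + 1)
  cols : ∀ i j : ℕ, j < mu (i + 1) → entry i j < entry (i + 1) j

/-- The content of an ordinary tableau: the number of boxes with entry `v`. -/
noncomputable def SSYT.content {mu : ℕ → ℕ} (T : SSYT mu) (v : ℕ) : ℕ :=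
  {p : ℕ × ℕ | p.2 < mu p.1 ∧ T.entry p.1 p.2 = v}.ncard

/-- A filling of the skew shape `mu / lam` (boxes `(i,j)` with `lam i ≤ j < mu i`) with
positive integers, strictly increasing along rows and down columns, such that every entry
in the `(i+1)`-st row (index `i : ℕ`) lies in `{1, …, (i+1) - 1} = {1, …, i}`. These are
the objects counted by `g_{λ,μ}` in Lenart's Schur expansion of `G_λ`. -/
structure LenartFilling (lam mu : ℕ → ℕ) where
  entry : ℕ → ℕ → ℕ
  outside : ∀ i j : ℕ, (j < lam i ∨ mu i ≤ j) → entry i j = 0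
  rowBound : ∀ i j : ℕ, lam i ≤ j → j < mu i → 1 ≤ entry i j ∧ entry i j ≤ i
  rows : ∀ i j : ℕ, lam i ≤ j → j + 1 < mu i → entry i j < entry i (j + 1)
  cols : ∀ i j : ℕ, lam i ≤ j → lam (i + 1) ≤ j → j < mu i → j < mu (i + 1) →
    entry i j < entry (i + 1) j

namespace Stmt16Aux

noncomputable section
open Classical

/-- min of a finset of naturals, 0 if empty -/
def nmin (S : Finset ℕ) : ℕ := if h : S.Nonempty then S.min' h else 0
def nmax (S : Finset ℕ) : ℕ := if h : S.Nonempty then S.max' h else 0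

lemma nmin_mem {S : Finset ℕ} (h : S.Nonempty) : nmin S ∈ S := by
  rw [nmin, dif_pos h]; exact S.min'_mem h

lemma nmax_mem {S : Finset ℕ} (h : S.Nonempty) : nmax S ∈ S := by
  rw [nmax, dif_pos h]; exact S.max'_mem h

lemma nmin_le {S : Finset ℕ} {a : ℕ} (ha : a ∈ S) : nmin S ≤ a := by
  rw [nmin, dif_pos ⟨a, ha⟩]; exact S.min'_le a ha

lemma le_nmax {S : Finset ℕ} {a : ℕ} (ha : a ∈ S) : a ≤ nmax S := by
  rw [nmax, dif_pos ⟨a, ha⟩]; exact S.le_max' a ha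

@[ext] structure St where
  nu : ℕ → ℕ
  cell : ℕ → ℕ → Finset ℕ
  lab : ℕ → ℕ → ℕ

def St.content (s : St) (v : ℕ) : ℕ :=
  {p : ℕ × ℕ | p.2 < s.nu p.1 ∧ v ∈ s.cell p.1 p.2}.ncard

structure Valid (lam : ℕ → ℕ) (k : ℕ) (s : St) : Prop where
  mono : ∀ a b : ℕ, a ≤ b → s.nu b ≤ s.nu a
  bdd : ∃ N, ∀ m, N ≤ m → s.nu m = 0
  contains : ∀ i, lam i ≤ s.nu i
  nonempty : ∀ i j, j < s.nu i → (s.cell i j).Nonempty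
  pos : ∀ i j, ∀ e ∈ s.cell i j, 1 ≤ e
  outside : ∀ i j, s.nu i ≤ j → s.cell i j = ∅
  rows : ∀ i j, j + 1 < s.nu i → ∀ a ∈ s.cell i j, ∀ b ∈ s.cell i (j + 1), a ≤ b
  cols : ∀ i j, j < s.nu (i + 1) → ∀ a ∈ s.cell i j, ∀ b ∈ s.cell (i + 1) j, a < b
  labIn : ∀ i j, lam i ≤ j → j < s.nu i →
    1 ≤ s.lab i j ∧ s.lab i j ≤ i ∧ s.lab i j ≤ k
  labOut : ∀ i j, (j < lam i ∨ s.nu i ≤ j) → s.lab i j = 0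
  labRow : ∀ i j, lam i ≤ j → j + 1 < s.nu i → s.lab i j < s.lab i (j + 1)
  labCol : ∀ i j, lam i ≤ j → lam (i + 1) ≤ j → j < s.nu (i + 1) →
    s.lab i j < s.lab (i + 1) j
  deep : ∀ i j a b, a ∈ s.cell i j → b ∈ s.cell i j → a < b → k ≤ i

/-- the excess (non-minimal) entries of row `r` -/
def arr (s : St) (r : ℕ) : Finset ℕ :=
  (Finset.range (s.nu r)).biUnion fun c => (s.cell r c).erase (nmin (s.cell r c))

/-- entries arriving into cell `(r, j)` in a forward round -/
def inc (s : St) : ℕ → ℕ → Finset ℕ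
  | 0, _ => ∅
  | r + 1, j => (arr s r).filter fun x =>
      (∀ a ∈ s.cell (r + 1) j, x < a) ∧ ∀ j' < j, ∃ a ∈ s.cell (r + 1) j', a ≤ x

/-- entries forming the new box of row `r` in a forward round -/
def nbox (s : St) : ℕ → Finset ℕ
  | 0 => ∅
  | r + 1 => (arr s r).filter fun x => ∀ j < s.nu (r + 1), ∃ a ∈ s.cell (r + 1) j, a ≤ x

/-- the forward round with label `k` -/
def fwd (k : ℕ) (s : St) : St where
  nu r := s.nu r + if (nbox s r).Nonempty then 1 else 0
  cell r j :=
    if j < s.nu r then insert (nmin (s.cell r j)) (inc s r j)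
    else if j = s.nu r ∧ (nbox s r).Nonempty then nbox s r else ∅
  lab r j := if j = s.nu r ∧ (nbox s r).Nonempty then k else s.lab r j

def hasK (k : ℕ) (s : St) (r : ℕ) : Prop := 0 < s.nu r ∧ s.lab r (s.nu r - 1) = k

def Lr (k : ℕ) (s : St) (r : ℕ) : ℕ := s.nu r - if hasK k s r then 1 else 0

/-- entries departing upwards from row `r` in a reverse round -/
def dep (k : ℕ) (s : St) (r : ℕ) : Finset ℕ :=
  ((Finset.range (Lr k s r)).biUnion fun c => (s.cell r c).erase (nmax (s.cell r c))) ∪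
    (if hasK k s r then s.cell r (s.nu r - 1) else ∅)

/-- the reverse round with label `k` -/
def rev (k : ℕ) (s : St) : St where
  nu r := Lr k s r
  cell r j :=
    if j < Lr k s r then
      insert (nmax (s.cell r j))
        ((dep k s (r + 1)).filter fun y =>
          nmax (s.cell r j) < y ∧ ∀ c < Lr k s r, j < c → y ≤ nmax (s.cell r c))
    else ∅
  lab r j := if j < Lr k s r then s.lab r j else 0


lemma mono_of_adj {f : ℕ → ℕ} (h : ∀ r, f (r + 1) ≤ f r) :
    ∀ a b : ℕ, a ≤ b → f b ≤ f a := by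
  intro a b hab
  induction b with
  | zero => simp_all
  | succ n ih =>
    rcases Nat.lt_or_ge a (n+1) with hlt | hge
    · exact le_trans (h n) (ih (Nat.lt_succ_iff.mp hlt))
    · have : a = n + 1 := by omega
      subst this; exact le_refl _

lemma mem_arr {s : St} {r x : ℕ} :
    x ∈ arr s r ↔ ∃ c, c < s.nu r ∧ x ∈ s.cell r c ∧ nmin (s.cell r c) < x := by
  simp only [arr, Finset.mem_biUnion, Finset.mem_range, Finset.mem_erase]
  constructor
  · rintro ⟨c, hc, hne, hx⟩
    exact ⟨c, hc, hx, lt_of_le_of_ne (nmin_le hx) (Ne.symm hne)⟩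
  · rintro ⟨c, hc, hx, hm⟩
    exact ⟨c, hc, Ne.symm (ne_of_lt hm), hx⟩

lemma inc_zero {s : St} {j : ℕ} : inc s 0 j = ∅ := rfl
lemma nbox_zero {s : St} : nbox s 0 = ∅ := rfl

lemma mem_inc {s : St} {r j x : ℕ} :
    x ∈ inc s (r + 1) j ↔ x ∈ arr s r ∧
      (∀ a ∈ s.cell (r + 1) j, x < a) ∧ ∀ j' < j, ∃ a ∈ s.cell (r + 1) j', a ≤ x := by
  simp [inc, Finset.mem_filter]

lemma mem_nbox {s : St} {r x : ℕ} :
    x ∈ nbox s (r + 1) ↔ x ∈ arr s r ∧ ∀ j < s.nu (r + 1), ∃ a ∈ s.cell (r + 1) j, a ≤ x := by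
  simp [nbox, Finset.mem_filter]

section ValidLemmas

variable {lam : ℕ → ℕ} {k : ℕ} {s : St} (h : Valid lam k s)
include h

/-- elements of a cell are ≤ min of the next cell in the row -/
lemma le_nmin_succ {i j a : ℕ} (hj : j + 1 < s.nu i) (ha : a ∈ s.cell i j) :
    a ≤ nmin (s.cell i (j + 1)) :=
  h.rows i j hj a ha _ (nmin_mem (h.nonempty i (j+1) hj))

/-- row minima are weakly increasing -/
lemma nmin_mono {i j j' : ℕ} (hjj : j ≤ j') (hj' : j' < s.nu i) :
    nmin (s.cell i j) ≤ nmin (s.cell i j') := by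
  induction j' with
  | zero => cases Nat.le_zero.mp hjj; exact le_refl _
  | succ n ih =>
    rcases Nat.lt_or_ge j (n+1) with hlt | hge
    · exact le_trans (ih (by omega) (by omega))
        (le_nmin_succ h hj' (nmin_mem (h.nonempty i n (by omega))))
    · have : j = n + 1 := by omega
      subst this; exact le_refl _

/-- strictly-separated cells in a row -/
lemma cross_row_le {i j j' a b : ℕ} (hjj : j < j') (hj' : j' < s.nu i)
    (ha : a ∈ s.cell i j) (hb : b ∈ s.cell i j') : a ≤ b := by
  have h1 : a ≤ nmin (s.cell i (j+1)) := le_nmin_succ h (by omega) ha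
  have h2 : nmin (s.cell i (j+1)) ≤ nmin (s.cell i j') := nmin_mono h (by omega) hj'
  exact le_trans h1 (le_trans h2 (nmin_le hb))

lemma arr_deep {r : ℕ} (hne : (arr s r).Nonempty) : k ≤ r := by
  obtain ⟨x, hx⟩ := hne
  obtain ⟨c, hc, hx, hm⟩ := mem_arr.mp hx
  exact h.deep r c _ _ (nmin_mem ⟨x, hx⟩) hx hm

lemma inc_src {r j x : ℕ} (hx : x ∈ inc s (r + 1) j) :
    ∃ c, j ≤ c ∧ c < s.nu r ∧ x ∈ s.cell r c ∧ nmin (s.cell r c) < x := by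
  obtain ⟨ha, _, hall⟩ := mem_inc.mp hx
  obtain ⟨c, hc, hxc, hm⟩ := mem_arr.mp ha
  refine ⟨c, ?_, hc, hxc, hm⟩
  by_contra hcj
  push_neg at hcj
  obtain ⟨a, hac, hax⟩ := hall c hcj
  have hcn : c < s.nu (r+1) := by
    by_contra hn
    push_neg at hn
    rw [h.outside (r+1) c hn] at hac
    exact absurd hac (Finset.notMem_empty a)
  exact absurd hax (not_le.mpr (h.cols r c hcn x hxc a hac))

lemma nbox_src {r x : ℕ} (hx : x ∈ nbox s (r + 1)) :
    ∃ c, s.nu (r + 1) ≤ c ∧ c < s.nu r ∧ x ∈ s.cell r c ∧ nmin (s.cell r c) < x := by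
  obtain ⟨ha, hall⟩ := mem_nbox.mp hx
  obtain ⟨c, hc, hxc, hm⟩ := mem_arr.mp ha
  refine ⟨c, ?_, hc, hxc, hm⟩
  by_contra hcj
  push_neg at hcj
  obtain ⟨a, hac, hax⟩ := hall c hcj
  exact absurd hax (not_le.mpr (h.cols r c hcj x hxc a hac))

lemma nbox_lt {r : ℕ} (hne : (nbox s (r + 1)).Nonempty) : s.nu (r + 1) < s.nu r := by
  obtain ⟨x, hx⟩ := hne
  obtain ⟨c, hc1, hc2, _, _⟩ := nbox_src h hx
  omega

lemma nbox_nonempty_lt {r : ℕ} (hne : (nbox s r).Nonempty) : 0 < r ∧ s.nu r < s.nu (r-1) := by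
  cases r with
  | zero => rw [nbox_zero] at hne; exact absurd hne (by simp)
  | succ n => exact ⟨Nat.succ_pos n, nbox_lt h hne⟩

lemma nbox_deep {r : ℕ} (hne : (nbox s r).Nonempty) : k + 1 ≤ r := by
  cases r with
  | zero => rw [nbox_zero] at hne; exact absurd hne (by simp)
  | succ n =>
    obtain ⟨x, hx⟩ := hne
    have := arr_deep h ⟨x, (mem_nbox.mp hx).1⟩
    omega

lemma inc_deep {r j : ℕ} (hne : (inc s r j).Nonempty) : k + 1 ≤ r := by
  cases r with
  | zero => rw [inc_zero] at hne; exact absurd hne (by simp)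
  | succ n =>
    obtain ⟨x, hx⟩ := hne
    have := arr_deep h ⟨x, (mem_inc.mp hx).1⟩
    omega

end ValidLemmas

theorem fwd_valid {lam : ℕ → ℕ} {k : ℕ} {s : St} (h : Valid lam k s) :
    Valid lam (k + 1) (fwd (k + 1) s) := by
  refine ⟨?_, ?_, ?_, ?_, ?_, ?_, ?_, ?_, ?_, ?_, ?_, ?_, ?_⟩
  · -- mono
    apply mono_of_adj
    intro r
    have h1 := h.mono r (r+1) (Nat.le_succ r)
    simp only [fwd]
    split_ifs with hb1 hb2 hb2
    · have := nbox_lt h hb1; omega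
    · have := nbox_lt h hb1; omega
    · omega
    · omega
  · -- bdd
    obtain ⟨N, hN⟩ := h.bdd
    refine ⟨N + 1, fun m hm => ?_⟩
    simp only [fwd]
    have hnu : s.nu m = 0 := hN m (by omega)
    have hbox : ¬ (nbox s m).Nonempty := by
      intro hne
      obtain ⟨hpos, hlt⟩ := nbox_nonempty_lt h hne
      have : s.nu (m-1) = 0 := hN (m-1) (by omega)
      omega
    rw [if_neg hbox]; omega
  · -- contains
    intro i
    have := h.contains i
    simp only [fwd]
    split_ifs <;> omega
  · -- nonempty
    intro i j hj
    simp only [fwd] at hj ⊢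
    by_cases hjl : j < s.nu i
    · rw [if_pos hjl]; exact ⟨_, Finset.mem_insert_self _ _⟩
    · have hb : (nbox s i).Nonempty := by
        split_ifs at hj with hbb
        · exact hbb
        · omega
      have hje : j = s.nu i := by
        rw [if_pos hb] at hj; omega
      rw [if_neg hjl, if_pos ⟨hje, hb⟩]
      exact hb
  · -- pos
    intro i j e he
    simp only [fwd] at he
    split_ifs at he with h1 h2
    · rcases Finset.mem_insert.mp he with rfl | hinc
      · exact h.pos i j _ (nmin_mem (h.nonempty i j h1))
      · cases i with
        | zero => exact absurd hinc (by simp [inc_zero])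
        | succ n =>
          obtain ⟨c, _, _, hec, _⟩ := inc_src h hinc
          exact h.pos n c _ hec
    · cases i with
      | zero => exact absurd he (by simp [nbox_zero])
      | succ n =>
        obtain ⟨c, _, _, hec, _⟩ := nbox_src h he
        exact h.pos n c _ hec
    · exact absurd he (Finset.notMem_empty e)
  · -- outside
    intro i j hj
    simp only [fwd] at hj ⊢
    have hj' : s.nu i ≤ j := by split_ifs at hj <;> omega
    rw [if_neg (not_lt.mpr hj')]
    by_cases hb : (nbox s i).Nonempty
    · rw [if_pos hb] at hj
      rw [if_neg (fun hc : j = s.nu i ∧ (nbox s i).Nonempty => absurd hc.1 (by omega))]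
    · rw [if_neg (fun hc => hb hc.2)]
  · -- rows
    intro i j hj a ha b hb
    simp only [fwd] at hj ha hb
    have hjlt : j < s.nu i := by split_ifs at hj <;> omega
    rw [if_pos hjlt] at ha
    have hmm : nmin (s.cell i j) ∈ s.cell i j := nmin_mem (h.nonempty i j hjlt)
    by_cases hj1 : j + 1 < s.nu i
    · rw [if_pos hj1] at hb
      have hmm1 : nmin (s.cell i (j+1)) ∈ s.cell i (j+1) := nmin_mem (h.nonempty i (j+1) hj1)
      rcases Finset.mem_insert.mp ha with rfl | hainc <;>
        rcases Finset.mem_insert.mp hb with hbe | hbinc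
      · exact hbe ▸ le_nmin_succ h hj1 hmm
      · cases i with
        | zero => exact absurd hbinc (by simp [inc_zero])
        | succ n =>
          obtain ⟨_, _, hall⟩ := mem_inc.mp hbinc
          obtain ⟨a', ha', haa'⟩ := hall j (Nat.lt_succ_self j)
          exact le_trans (nmin_le ha') haa'
      · cases i with
        | zero => exact absurd hainc (by simp [inc_zero])
        | succ n =>
          have hlt := (mem_inc.mp hainc).2.1 _ hmm
          exact hbe ▸ le_trans (le_of_lt hlt) (le_nmin_succ h hj1 hmm)
      · cases i with
        | zero => exact absurd hainc (by simp [inc_zero])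
        | succ n =>
          obtain ⟨_, _, hall⟩ := mem_inc.mp hbinc
          obtain ⟨a', ha', haa'⟩ := hall j (Nat.lt_succ_self j)
          exact le_trans (le_of_lt ((mem_inc.mp hainc).2.1 a' ha')) haa'
    · have hbox : (nbox s i).Nonempty := by
        split_ifs at hj with hbb
        · exact hbb
        · omega
      have hje : j + 1 = s.nu i := by rw [if_pos hbox] at hj; omega
      rw [if_neg hj1, if_pos ⟨hje, hbox⟩] at hb
      cases i with
      | zero => exact absurd hb (by simp [nbox_zero])
      | succ n =>
        obtain ⟨_, hall⟩ := mem_nbox.mp hb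
        obtain ⟨a', ha', haa'⟩ := hall j hjlt
        rcases Finset.mem_insert.mp ha with rfl | hainc
        · exact le_trans (nmin_le ha') haa'
        · exact le_trans (le_of_lt ((mem_inc.mp hainc).2.1 a' ha')) haa'
  · -- cols
    intro i j hj a ha b hb
    simp only [fwd] at hj ha hb
    have hjlti : j < s.nu i := by
      by_cases hbb : (nbox s (i+1)).Nonempty
      · have := nbox_lt h hbb; rw [if_pos hbb] at hj; omega
      · rw [if_neg hbb] at hj
        have := h.mono i (i+1) (Nat.le_succ i); omega
    rw [if_pos hjlti] at ha
    have hmm : nmin (s.cell i j) ∈ s.cell i j := nmin_mem (h.nonempty i j hjlti)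
    have ha' : a ≤ nmin (s.cell i j) := by
      rcases Finset.mem_insert.mp ha with rfl | hainc
      · exact le_refl _
      · cases i with
        | zero => exact absurd hainc (by simp [inc_zero])
        | succ n => exact le_of_lt ((mem_inc.mp hainc).2.1 _ hmm)
    by_cases hjl : j < s.nu (i+1)
    · rw [if_pos hjl] at hb
      rcases Finset.mem_insert.mp hb with rfl | hbinc
      · exact lt_of_le_of_lt ha'
          (h.cols i j hjl _ hmm _ (nmin_mem (h.nonempty (i+1) j hjl)))
      · obtain ⟨c, hjc, hcn, hbc, hmb⟩ := inc_src h hbinc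
        have hmono : nmin (s.cell i j) ≤ nmin (s.cell i c) := nmin_mono h hjc hcn
        omega
    · have hbox : (nbox s (i+1)).Nonempty := by
        split_ifs at hj with hbb
        · exact hbb
        · omega
      have hje : j = s.nu (i+1) := by rw [if_pos hbox] at hj; omega
      rw [if_neg hjl, if_pos ⟨hje, hbox⟩] at hb
      obtain ⟨c, hc1, hcn, hbc, hmb⟩ := nbox_src h hb
      have hmono : nmin (s.cell i j) ≤ nmin (s.cell i c) := nmin_mono h (by omega) hcn
      omega
  · -- labIn
    intro i j hli hj
    simp only [fwd] at hj ⊢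
    by_cases hb : j = s.nu i ∧ (nbox s i).Nonempty
    · rw [if_pos hb]
      have := nbox_deep h hb.2
      exact ⟨by omega, by omega, le_refl _⟩
    · rw [if_neg hb]
      have hjlt : j < s.nu i := by
        split_ifs at hj with hbb
        · rcases Nat.lt_or_ge j (s.nu i) with h1 | h1
          · exact h1
          · exact absurd ⟨by omega, hbb⟩ hb
        · omega
      obtain ⟨h1, h2, h3⟩ := h.labIn i j hli hjlt
      exact ⟨h1, h2, by omega⟩
  · -- labOut
    intro i j hcond
    simp only [fwd] at hcond ⊢
    by_cases hb : j = s.nu i ∧ (nbox s i).Nonempty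
    · exfalso
      have hle := h.contains i
      rcases hcond with hc | hc
      · omega
      · rw [if_pos hb.2] at hc; omega
    · rw [if_neg hb]
      apply h.labOut
      rcases hcond with hc | hc
      · exact Or.inl hc
      · right; split_ifs at hc <;> omega
  · -- labRow
    intro i j hli hj
    simp only [fwd] at hj ⊢
    have hjlt : j < s.nu i := by split_ifs at hj <;> omega
    rw [if_neg (fun hc : j = s.nu i ∧ (nbox s i).Nonempty => absurd hc.1 (by omega))]
    by_cases hj1 : j + 1 < s.nu i
    · rw [if_neg (fun hc : j + 1 = s.nu i ∧ (nbox s i).Nonempty => absurd hc.1 (by omega))]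
      exact h.labRow i j hli hj1
    · have hbox : (nbox s i).Nonempty := by
        split_ifs at hj with hbb
        · exact hbb
        · omega
      have hje : j + 1 = s.nu i := by rw [if_pos hbox] at hj; omega
      rw [if_pos ⟨hje, hbox⟩]
      have := (h.labIn i j hli hjlt).2.2
      omega
  · -- labCol
    intro i j hli hli1 hj
    simp only [fwd] at hj ⊢
    have hjlti : j < s.nu i := by
      by_cases hbb : (nbox s (i+1)).Nonempty
      · have := nbox_lt h hbb; rw [if_pos hbb] at hj; omega
      · rw [if_neg hbb] at hj
        have := h.mono i (i+1) (Nat.le_succ i); omega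
    rw [if_neg (fun hc : j = s.nu i ∧ (nbox s i).Nonempty => absurd hc.1 (by omega))]
    by_cases hjl : j < s.nu (i+1)
    · rw [if_neg (fun hc : j = s.nu (i+1) ∧ (nbox s (i+1)).Nonempty => absurd hc.1 (by omega))]
      exact h.labCol i j hli hli1 hjl
    · have hbox : (nbox s (i+1)).Nonempty := by
        split_ifs at hj with hbb
        · exact hbb
        · omega
      have hje : j = s.nu (i+1) := by rw [if_pos hbox] at hj; omega
      rw [if_pos ⟨hje, hbox⟩]
      have := (h.labIn i j hli hjlti).2.2
      omega
  · -- deep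
    intro i j a b haa hbb hab
    simp only [fwd] at haa hbb
    split_ifs at haa hbb with h1 h2
    · rcases Finset.mem_insert.mp haa with rfl | hai
      · rcases Finset.mem_insert.mp hbb with hbe | hbi
        · exact absurd (hbe ▸ hab) (lt_irrefl _)
        · exact inc_deep h ⟨b, hbi⟩
      · exact inc_deep h ⟨a, hai⟩
    · exact nbox_deep h ⟨a, haa⟩
    · exact absurd haa (Finset.notMem_empty a)



lemma nmax_insert_of_lt {m : ℕ} {X : Finset ℕ} (hX : ∀ x ∈ X, x < m) :
    nmax (insert m X) = m := by
  have hne : (insert m X).Nonempty := ⟨m, Finset.mem_insert_self m X⟩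
  apply le_antisymm
  · rcases Finset.mem_insert.mp (nmax_mem hne) with he | hX'
    · exact le_of_eq he
    · exact le_of_lt (hX _ hX')
  · exact le_nmax (Finset.mem_insert_self m X)

lemma nmin_insert_of_gt {m : ℕ} {X : Finset ℕ} (hX : ∀ x ∈ X, m < x) :
    nmin (insert m X) = m := by
  have hne : (insert m X).Nonempty := ⟨m, Finset.mem_insert_self m X⟩
  apply le_antisymm
  · exact nmin_le (Finset.mem_insert_self m X)
  · rcases Finset.mem_insert.mp (nmin_mem hne) with he | hX'
    · exact le_of_eq he.symm
    · exact le_of_lt (hX _ hX')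

lemma arr_place {lam : ℕ → ℕ} {k : ℕ} {s : St} (h : Valid lam k s) {r x : ℕ}
    (hx : x ∈ arr s r) :
    (∃ j < s.nu (r+1), x ∈ inc s (r+1) j) ∨ x ∈ nbox s (r+1) := by
  by_cases hP : ∃ j, j < s.nu (r+1) ∧ ∀ a ∈ s.cell (r+1) j, x < a
  · left
    obtain ⟨hj₀n, hj₀b⟩ := Nat.find_spec hP
    refine ⟨Nat.find hP, hj₀n, mem_inc.mpr ⟨hx, hj₀b, fun j' hj' => ?_⟩⟩
    have hnot := Nat.find_min hP hj'
    have hj'n : j' < s.nu (r+1) := lt_trans hj' hj₀n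
    push_neg at hnot
    obtain ⟨a, ha, hax⟩ := hnot hj'n
    exact ⟨a, ha, hax⟩
  · right
    push_neg at hP
    refine mem_nbox.mpr ⟨hx, fun j hj => ?_⟩
    obtain ⟨a, ha, hax⟩ := hP j hj
    exact ⟨a, ha, hax⟩


def plc (s : St) (r x : ℕ) : ℕ :=
  if h : ∃ j, j < s.nu r ∧ ∀ a ∈ s.cell r j, x < a then Nat.find h else s.nu r

section PlcLemmas

variable {lam : ℕ → ℕ} {k : ℕ} {s : St} (h : Valid lam k s)

lemma plc_inc (hval : Valid lam k s) {r j x : ℕ} (hj : j < s.nu (r+1))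
    (hx : x ∈ inc s (r+1) j) : plc s (r+1) x = j := by
  obtain ⟨_, hbel, hall⟩ := mem_inc.mp hx
  have hex : ∃ j0, j0 < s.nu (r+1) ∧ ∀ a ∈ s.cell (r+1) j0, x < a := ⟨j, hj, hbel⟩
  rw [plc, dif_pos hex]
  have hle : Nat.find hex ≤ j := Nat.find_le ⟨hj, hbel⟩
  rcases Nat.eq_or_lt_of_le hle with he | hlt
  · exact he
  · exfalso
    obtain ⟨_, hbel0⟩ := Nat.find_spec hex
    obtain ⟨a, ha, hax⟩ := hall _ hlt
    exact absurd (hbel0 a ha) (not_lt.mpr hax)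

lemma plc_nbox {r x : ℕ} (hx : x ∈ nbox s (r+1)) : plc s (r+1) x = s.nu (r+1) := by
  obtain ⟨_, hall⟩ := mem_nbox.mp hx
  rw [plc, dif_neg]
  rintro ⟨j0, hj0, hbel0⟩
  obtain ⟨a, ha, hax⟩ := hall j0 hj0
  exact absurd (hbel0 a ha) (not_lt.mpr hax)

lemma plc_total (hval : Valid lam k s) {r x : ℕ} (hx : x ∈ arr s r) :
    (plc s (r+1) x < s.nu (r+1) ∧ x ∈ inc s (r+1) (plc s (r+1) x)) ∨
      (plc s (r+1) x = s.nu (r+1) ∧ x ∈ nbox s (r+1)) := by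
  rcases arr_place hval hx with ⟨j, hj, hji⟩ | hb
  · left
    have := plc_inc hval hj hji
    rw [this]
    exact ⟨hj, hji⟩
  · right
    exact ⟨plc_nbox hb, hb⟩

lemma arr_unique (hval : Valid lam k s) {r j j' x : ℕ} (hj : j < s.nu r) (hj' : j' < s.nu r)
    (hx : x ∈ s.cell r j) (hx' : x ∈ s.cell r j') (hm : nmin (s.cell r j) < x)
    (hm' : nmin (s.cell r j') < x) : j = j' := by
  rcases lt_trichotomy j j' with hlt | he | hlt
  · exfalso
    have : x ≤ nmin (s.cell r j') :=
      le_trans (le_nmin_succ hval (by omega) hx) (nmin_mono hval (by omega) hj')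
    omega
  · exact he
  · exfalso
    have : x ≤ nmin (s.cell r j) :=
      le_trans (le_nmin_succ hval (by omega) hx') (nmin_mono hval (by omega) hj)
    omega

end PlcLemmas

lemma fwd_cell_cases {k' : ℕ} {s : St} {r c v : ℕ} (hv : v ∈ (fwd k' s).cell r c) :
    (c < s.nu r ∧ (v = nmin (s.cell r c) ∨ v ∈ inc s r c)) ∨ (c = s.nu r ∧ v ∈ nbox s r) := by
  simp only [fwd] at hv
  split_ifs at hv with h1 h2
  · exact Or.inl ⟨h1, Finset.mem_insert.mp hv⟩
  · exact Or.inr ⟨h2.1, hv⟩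
  · exact absurd hv (Finset.notMem_empty v)

lemma fwd_cell_mem1 {k' : ℕ} {s : St} {r c v : ℕ} (hc : c < s.nu r)
    (hv : v = nmin (s.cell r c) ∨ v ∈ inc s r c) : v ∈ (fwd k' s).cell r c := by
  simp only [fwd]
  rw [if_pos hc]
  rcases hv with rfl | hv
  · exact Finset.mem_insert_self _ _
  · exact Finset.mem_insert_of_mem hv

lemma fwd_cell_mem2 {k' : ℕ} {s : St} {r v : ℕ} (hv : v ∈ nbox s r) :
    v ∈ (fwd k' s).cell r (s.nu r) := by
  simp only [fwd]
  rw [if_neg (lt_irrefl _)]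
  split_ifs with hc
  · exact hv
  · exact absurd ⟨by trivial, ⟨v, hv⟩⟩ hc

lemma fwd_nu_ge {k' : ℕ} {s : St} (r : ℕ) : s.nu r ≤ (fwd k' s).nu r := by
  simp only [fwd]; split_ifs <;> omega

lemma fwd_nu_box {k' : ℕ} {s : St} {r : ℕ} (hb : (nbox s r).Nonempty) :
    s.nu r < (fwd k' s).nu r := by
  simp only [fwd]; rw [if_pos hb]; omega

theorem fwd_content {lam : ℕ → ℕ} {k k' : ℕ} {s : St} (h : Valid lam k s) (v : ℕ)
    (hv : 1 ≤ v) : (fwd k' s).content v = s.content v := by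
  classical
  set f : ℕ × ℕ → ℕ × ℕ :=
    fun p => if v = nmin (s.cell p.1 p.2) then p else (p.1 + 1, plc s (p.1 + 1) v) with hf
  have hinj : Set.InjOn f {p : ℕ × ℕ | p.2 < s.nu p.1 ∧ v ∈ s.cell p.1 p.2} := by
    rintro ⟨i, j⟩ ⟨hij, hvij⟩ ⟨i', j'⟩ ⟨hij', hvij'⟩ heq
    simp only [hf] at heq
    split_ifs at heq with h1 h2 h2
    · exact heq
    · exfalso
      have hx' : v ∈ arr s i' :=
        mem_arr.mpr ⟨j', hij', hvij', lt_of_le_of_ne (nmin_le hvij') (Ne.symm h2)⟩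
      rw [Prod.mk.injEq] at heq
      obtain ⟨hi, hj⟩ := heq
      dsimp only at hij hvij hij' hvij'
      subst hi
      subst hj
      rcases plc_total h hx' with ⟨hlt, hin⟩ | ⟨he, hnb⟩
      · have hbel := (mem_inc.mp hin).2.1
        exact absurd (hbel v hvij) (lt_irrefl v)
      · omega
    · exfalso
      have hx : v ∈ arr s i :=
        mem_arr.mpr ⟨j, hij, hvij, lt_of_le_of_ne (nmin_le hvij) (Ne.symm h1)⟩
      rw [Prod.mk.injEq] at heq
      obtain ⟨hi, hj⟩ := heq
      dsimp only at hij hvij hij' hvij'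
      subst hi
      subst hj
      rcases plc_total h hx with ⟨hlt, hin⟩ | ⟨he, hnb⟩
      · have hbel := (mem_inc.mp hin).2.1
        exact absurd (hbel v hvij') (lt_irrefl v)
      · omega
    · rw [Prod.mk.injEq] at heq
      obtain ⟨hi, hj⟩ := heq
      dsimp only at hij hvij hij' hvij'
      have hi' : i = i' := by omega
      subst hi'
      have hj' : j = j' := arr_unique h hij hij' hvij hvij'
        (lt_of_le_of_ne (nmin_le hvij) (Ne.symm h1))
        (lt_of_le_of_ne (nmin_le hvij') (Ne.symm h2))
      rw [hj']
  have him : {p : ℕ × ℕ | p.2 < (fwd k' s).nu p.1 ∧ v ∈ (fwd k' s).cell p.1 p.2}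
      = f '' {p : ℕ × ℕ | p.2 < s.nu p.1 ∧ v ∈ s.cell p.1 p.2} := by
    ext ⟨r, c⟩
    simp only [Set.mem_image, Set.mem_setOf_eq]
    constructor
    · rintro ⟨hc, hvc⟩
      rcases fwd_cell_cases hvc with ⟨hcn, hcase⟩ | ⟨hce, hnb⟩
      · rcases hcase with hmin | hinc
        · refine ⟨(r, c), ⟨hcn, hmin ▸ nmin_mem (h.nonempty r c hcn)⟩, ?_⟩
          simp only [hf]
          rw [if_pos hmin]
        · cases r with
          | zero => exact absurd hinc (by simp [inc_zero])
          | succ m =>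
            obtain ⟨harr, _, _⟩ := mem_inc.mp hinc
            obtain ⟨c', hc', hvc', hm'⟩ := mem_arr.mp harr
            refine ⟨(m, c'), ⟨hc', hvc'⟩, ?_⟩
            simp only [hf]
            rw [if_neg (by omega)]
            rw [plc_inc h hcn hinc]
      · cases r with
        | zero => exact absurd hnb (by simp [nbox_zero])
        | succ m =>
          obtain ⟨harr, _⟩ := mem_nbox.mp hnb
          obtain ⟨c', hc', hvc', hm'⟩ := mem_arr.mp harr
          refine ⟨(m, c'), ⟨hc', hvc'⟩, ?_⟩
          simp only [hf]
          rw [if_neg (by omega)]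
          rw [plc_nbox hnb, hce]
    · rintro ⟨⟨i, j⟩, ⟨hij, hvij⟩, hfeq⟩
      simp only [hf] at hfeq
      dsimp only at hij hvij
      split_ifs at hfeq with h1
      · rw [Prod.mk.injEq] at hfeq
        obtain ⟨hr, hc⟩ := hfeq
        subst hr
        subst hc
        exact ⟨lt_of_lt_of_le hij (fwd_nu_ge i), fwd_cell_mem1 hij (Or.inl h1)⟩
      · rw [Prod.mk.injEq] at hfeq
        obtain ⟨hr, hc⟩ := hfeq
        subst hr
        subst hc
        have hx : v ∈ arr s i :=
          mem_arr.mpr ⟨j, hij, hvij, lt_of_le_of_ne (nmin_le hvij) (Ne.symm h1)⟩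
        rcases plc_total h hx with ⟨hlt, hin⟩ | ⟨he, hnb⟩
        · exact ⟨lt_of_lt_of_le hlt (fwd_nu_ge (i+1)), fwd_cell_mem1 hlt (Or.inr hin)⟩
        · rw [he]
          exact ⟨fwd_nu_box ⟨v, hnb⟩, fwd_cell_mem2 hnb⟩
  rw [St.content, St.content, him, Set.ncard_image_of_injOn hinj]



section RevLemmas

variable {lam : ℕ → ℕ} {k : ℕ} {s : St}

lemma lt_nmax_of_mem_ne {S : Finset ℕ} {a : ℕ} (ha : a ∈ S) (hne : a ≠ nmax S) :
    a < nmax S := lt_of_le_of_ne (le_nmax ha) hne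

lemma nmax_le_nmin_succ (h : Valid lam k s) {i j : ℕ} (hj : j + 1 < s.nu i) :
    nmax (s.cell i j) ≤ nmin (s.cell i (j + 1)) :=
  h.rows i j hj _ (nmax_mem (h.nonempty i j (by omega))) _ (nmin_mem (h.nonempty i (j+1) hj))

lemma nmax_mono (h : Valid lam k s) {i j j' : ℕ} (hjj : j ≤ j') (hj' : j' < s.nu i) :
    nmax (s.cell i j) ≤ nmax (s.cell i j') := by
  induction j' with
  | zero => cases Nat.le_zero.mp hjj; exact le_refl _
  | succ n ih =>
    rcases Nat.lt_or_ge j (n+1) with hlt | hge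
    · exact le_trans (ih (by omega) (by omega))
        (le_trans (nmax_le_nmin_succ h hj') (le_nmax (nmin_mem (h.nonempty i (n+1) hj'))))
    · have : j = n + 1 := by omega
      subst this; exact le_refl _

lemma labRow_mono (h : Valid lam k s) {i j j' : ℕ} (hl : lam i ≤ j) (hjj : j ≤ j')
    (hj' : j' < s.nu i) : s.lab i j ≤ s.lab i j' := by
  induction j' with
  | zero => cases Nat.le_zero.mp hjj; exact le_refl _
  | succ n ih =>
    rcases Nat.lt_or_ge j (n+1) with hlt | hge
    · exact le_trans (ih (by omega) (by omega)) (le_of_lt (h.labRow i n (by omega) hj'))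
    · have : j = n + 1 := by omega
      subst this; exact le_refl _

lemma hasK_lam (h : Valid lam (k+1) s) {r : ℕ} (hk : hasK (k+1) s r) :
    lam r ≤ s.nu r - 1 := by
  by_contra hc
  have h1 := h.labOut r (s.nu r - 1) (Or.inl (by omega))
  have h2 := hk.2
  rw [h1] at h2
  omega

lemma hasK_step (hlam : IsPartitionFn lam) (h : Valid lam (k+1) s) {r : ℕ}
    (hk : hasK (k+1) s r) : s.nu (r + 1) < s.nu r := by
  by_contra hc
  push_neg at hc
  have heq : s.nu (r+1) = s.nu r := le_antisymm (h.mono r (r+1) (Nat.le_succ r)) hc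
  have h0 := hk.1
  have h3 := hk.2
  have hl := hasK_lam h hk
  have hlt : s.nu r - 1 < s.nu (r+1) := by omega
  have h1 := h.labCol r (s.nu r - 1) hl (le_trans (hlam.1 r (r+1) (Nat.le_succ r)) hl) hlt
  have h2 := (h.labIn (r+1) (s.nu r - 1) (le_trans (hlam.1 r (r+1) (Nat.le_succ r)) hl)
    (by omega)).2.2
  omega

lemma Lr_adj (hlam : IsPartitionFn lam) (h : Valid lam (k+1) s) (r : ℕ) :
    Lr (k+1) s (r+1) ≤ Lr (k+1) s r := by
  have hm := h.mono r (r+1) (Nat.le_succ r)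
  unfold Lr
  split_ifs with h1 h2 h2
  · have := hasK_step hlam h h1; omega
  · have := hasK_step hlam h h1; omega
  · have := hasK_step hlam h h2; omega
  · omega

lemma Lr_le (k' : ℕ) (r : ℕ) : Lr k' s r ≤ s.nu r := by
  unfold Lr; split_ifs <;> omega

lemma mem_dep {r y : ℕ} :
    y ∈ dep k s r ↔ (∃ c < Lr k s r, y ∈ s.cell r c ∧ y < nmax (s.cell r c)) ∨
      (hasK k s r ∧ y ∈ s.cell r (s.nu r - 1)) := by
  simp only [dep, Finset.mem_union, Finset.mem_biUnion, Finset.mem_range, Finset.mem_erase]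
  constructor
  · rintro (⟨c, hc, hne, hy⟩ | hy)
    · exact Or.inl ⟨c, hc, hy, lt_nmax_of_mem_ne hy hne⟩
    · split_ifs at hy with hk
      · exact Or.inr ⟨hk, hy⟩
      · exact absurd hy (Finset.notMem_empty y)
  · rintro (⟨c, hc, hy, hlt⟩ | ⟨hk, hy⟩)
    · exact Or.inl ⟨c, hc, ne_of_lt hlt, hy⟩
    · right; rw [if_pos hk]; exact hy

/-- every departing entry of row r+1 can be lifted: some column of row r has smaller max -/
lemma dep_lift (hlam : IsPartitionFn lam) (h : Valid lam (k+1) s) {r y : ℕ}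
    (hy : y ∈ dep (k+1) s (r+1)) :
    ∃ c < Lr (k+1) s r, nmax (s.cell r c) < y ∧ y ∈ s.cell (r+1) c := by
  rcases mem_dep.mp hy with ⟨c, hc, hyc, _⟩ | ⟨hk, hyc⟩
  · have hc' : c < Lr (k+1) s r := lt_of_lt_of_le hc (Lr_adj hlam h r)
    have hcn : c < s.nu (r+1) := lt_of_lt_of_le hc (Lr_le _ _)
    refine ⟨c, hc', ?_, hyc⟩
    exact h.cols r c hcn _ (nmax_mem (h.nonempty r c (lt_of_lt_of_le hc'  (Lr_le _ _)))) y hyc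
  · have hnu : 0 < s.nu (r+1) := hk.1
    set cB := s.nu (r+1) - 1 with hcB
    have hcBn : cB < s.nu (r+1) := by omega
    have hcB' : cB < Lr (k+1) s r := by
      unfold Lr
      split_ifs with h1
      · have := hasK_step hlam h h1; omega
      · have := h.mono r (r+1) (Nat.le_succ r); omega
    refine ⟨cB, hcB', ?_, hyc⟩
    exact h.cols r cB hcBn _ (nmax_mem (h.nonempty r cB (lt_of_lt_of_le hcB' (Lr_le _ _)))) y hyc

lemma dep_deep (h : Valid lam (k+1) s) {r y : ℕ} (hy : y ∈ dep (k+1) s (r+1)) : k ≤ r := by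
  rcases mem_dep.mp hy with ⟨c, hc, hyc, hlt⟩ | ⟨hk, hyc⟩
  · have := h.deep (r+1) c y _ hyc (nmax_mem ⟨y, hyc⟩) hlt
    omega
  · have h0 : 0 < s.nu (r+1) := hk.1
    have hl : lam (r+1) ≤ s.nu (r+1) - 1 := hasK_lam h hk
    have := (h.labIn (r+1) (s.nu (r+1) - 1) hl (by omega)).2.1
    rw [hk.2] at this
    omega

end RevLemmas

theorem rev_valid {lam : ℕ → ℕ} (hlam : IsPartitionFn lam) {k : ℕ} {s : St}
    (h : Valid lam (k + 1) s) : Valid lam k (rev (k + 1) s) := by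
  refine ⟨?_, ?_, ?_, ?_, ?_, ?_, ?_, ?_, ?_, ?_, ?_, ?_, ?_⟩
  · intro a b hab
    simp only [rev]
    exact mono_of_adj (Lr_adj hlam h) a b hab
  · obtain ⟨N, hN⟩ := h.bdd
    refine ⟨N, fun m hm => ?_⟩
    simp only [rev]
    have h1 := Lr_le (s := s) (k+1) m
    have h2 := hN m hm
    omega
  · intro i
    simp only [rev]
    unfold Lr
    split_ifs with h1
    · have := hasK_lam h h1
      omega
    · have := h.contains i
      omega
  · intro i j hj
    simp only [rev] at hj ⊢
    rw [if_pos hj]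
    exact ⟨_, Finset.mem_insert_self _ _⟩
  · intro i j e he
    simp only [rev] at he
    split_ifs at he with h1
    · rcases Finset.mem_insert.mp he with rfl | hf
      · exact h.pos i j _ (nmax_mem (h.nonempty i j (lt_of_lt_of_le h1 (Lr_le _ _))))
      · have hd := (Finset.mem_filter.mp hf).1
        rcases mem_dep.mp hd with ⟨c, hc, hyc, _⟩ | ⟨hk, hyc⟩
        · exact h.pos (i+1) c _ hyc
        · exact h.pos (i+1) _ _ hyc
    · exact absurd he (Finset.notMem_empty e)
  · intro i j hj
    simp only [rev] at hj ⊢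
    rw [if_neg (not_lt.mpr hj)]
  · -- rows
    intro i j hj a ha b hb
    simp only [rev] at hj ha hb
    rw [if_pos (by omega)] at ha
    rw [if_pos hj] at hb
    have hjn : j + 1 < s.nu i := lt_of_lt_of_le hj (Lr_le _ _)
    have key : a ≤ nmax (s.cell i (j+1)) := by
      rcases Finset.mem_insert.mp ha with rfl | hf
      · exact nmax_mono h (Nat.le_succ j) hjn
      · exact ((Finset.mem_filter.mp hf).2).2 (j+1) hj (Nat.lt_succ_self j)
    rcases Finset.mem_insert.mp hb with rfl | hf
    · exact key
    · exact le_trans key (le_of_lt ((Finset.mem_filter.mp hf).2).1)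
  · -- cols
    intro i j hj a ha b hb
    simp only [rev] at hj ha hb
    have hjLi : j < Lr (k+1) s i := lt_of_lt_of_le hj (Lr_adj hlam h i)
    rw [if_pos hjLi] at ha
    rw [if_pos hj] at hb
    have hjn1 : j < s.nu (i+1) := lt_of_lt_of_le hj (Lr_le _ _)
    have hjni : j < s.nu i := lt_of_lt_of_le hjLi (Lr_le _ _)
    have key : a < nmax (s.cell (i+1) j) := by
      rcases Finset.mem_insert.mp ha with rfl | hf
      · exact h.cols i j hjn1 _ (nmax_mem (h.nonempty i j hjni)) _
          (nmax_mem (h.nonempty (i+1) j hjn1))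
      · obtain ⟨hd, hgt, hallc⟩ := Finset.mem_filter.mp hf
        rcases mem_dep.mp hd with ⟨c, hc, hyc, hylt⟩ | ⟨hk, hyc⟩
        · have hcle : c ≤ j := by
            by_contra hcj
            push_neg at hcj
            have h1 : a ≤ nmax (s.cell i c) :=
              hallc c (lt_of_lt_of_le hc (Lr_adj hlam h i)) hcj
            have h2 : nmax (s.cell i c) < a :=
              h.cols i c (lt_of_lt_of_le hc (Lr_le _ _)) _
                (nmax_mem (h.nonempty i c
                  (lt_of_lt_of_le (lt_of_lt_of_le hc (Lr_adj hlam h i)) (Lr_le _ _)))) a hyc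
            omega
          exact lt_of_lt_of_le hylt (nmax_mono h hcle hjn1)
        · exfalso
          have h0 := hk.1
          have hcB : s.nu (i+1) - 1 < Lr (k+1) s i := by
            unfold Lr
            split_ifs with hx
            · have := hasK_step hlam h hx; omega
            · have := h.mono i (i+1) (Nat.le_succ i); omega
          have hLr1 : Lr (k+1) s (i+1) = s.nu (i+1) - 1 := by unfold Lr; rw [if_pos hk]
          have hjcB : j < s.nu (i+1) - 1 := by rw [hLr1] at hj; exact hj
          have h1 : a ≤ nmax (s.cell i (s.nu (i+1) - 1)) := hallc _ hcB hjcB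
          have h2 : nmax (s.cell i (s.nu (i+1) - 1)) < a :=
            h.cols i _ (by omega) _
              (nmax_mem (h.nonempty i _ (lt_of_lt_of_le hcB (Lr_le _ _)))) a hyc
          omega
    rcases Finset.mem_insert.mp hb with rfl | hf
    · exact key
    · exact lt_trans key ((Finset.mem_filter.mp hf).2).1
  · -- labIn
    intro i j hli hj
    simp only [rev] at hj ⊢
    rw [if_pos hj]
    have hjn : j < s.nu i := lt_of_lt_of_le hj (Lr_le _ _)
    obtain ⟨h1, h2, h3⟩ := h.labIn i j hli hjn
    refine ⟨h1, h2, ?_⟩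
    by_cases hk : hasK (k+1) s i
    · have hL : Lr (k+1) s i = s.nu i - 1 := by unfold Lr; rw [if_pos hk]
      have hj' := hj
      rw [hL] at hj'
      have hlast := hk.2
      have hstep : s.lab i j < s.lab i (j+1) := h.labRow i j hli (by omega)
      have hmono2 : s.lab i (j+1) ≤ s.lab i (s.nu i - 1) :=
        labRow_mono h (by omega) (by omega) (by omega)
      omega
    · have hL : Lr (k+1) s i = s.nu i := by unfold Lr; rw [if_neg hk]; omega
      have h0 : 0 < s.nu i := by omega
      have hne : s.lab i (s.nu i - 1) ≠ k + 1 := fun hc => hk ⟨h0, hc⟩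
      have hlast := (h.labIn i (s.nu i - 1) (by omega) (by omega)).2.2
      have hmono2 : s.lab i j ≤ s.lab i (s.nu i - 1) :=
        labRow_mono h hli (by omega) (by omega)
      omega
  · -- labOut
    intro i j hcond
    simp only [rev] at hcond ⊢
    by_cases hj : j < Lr (k+1) s i
    · rw [if_pos hj]
      apply h.labOut
      rcases hcond with hc | hc
      · exact Or.inl hc
      · exact absurd hc (not_le.mpr hj)
    · rw [if_neg hj]
  · -- labRow
    intro i j hli hj
    simp only [rev] at hj ⊢
    rw [if_pos (by omega), if_pos hj]
    exact h.labRow i j hli (lt_of_lt_of_le hj (Lr_le _ _))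
  · -- labCol
    intro i j hli hli1 hj
    simp only [rev] at hj ⊢
    have hjLi : j < Lr (k+1) s i := lt_of_lt_of_le hj (Lr_adj hlam h i)
    rw [if_pos hjLi, if_pos hj]
    exact h.labCol i j hli hli1 (lt_of_lt_of_le hj (Lr_le _ _))
  · -- deep
    intro i j a b ha hb hab
    simp only [rev] at ha hb
    split_ifs at ha hb with h1
    · rcases Finset.mem_insert.mp ha with rfl | haf
      · rcases Finset.mem_insert.mp hb with hbe | hbf
        · exact absurd (hbe ▸ hab) (lt_irrefl _)
        · exact dep_deep h (Finset.mem_filter.mp hbf).1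
      · exact dep_deep h (Finset.mem_filter.mp haf).1
    · exact absurd ha (Finset.notMem_empty a)


theorem fwd_rev {lam : ℕ → ℕ} (hlam : IsPartitionFn lam) {k : ℕ} {s : St}
    (h : Valid lam (k + 1) s) : fwd (k + 1) (rev (k + 1) s) = s := by
  set u := rev (k + 1) s with hu
  have hU0 : ∀ r, u.nu r = Lr (k+1) s r := fun r => rfl
  have hUcell : ∀ r j, j < Lr (k+1) s r → u.cell r j =
      insert (nmax (s.cell r j))
        ((dep (k+1) s (r + 1)).filter fun y =>
          nmax (s.cell r j) < y ∧ ∀ c < Lr (k+1) s r, j < c → y ≤ nmax (s.cell r c)) := by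
    intro r j hj
    simp only [hu, rev]
    rw [if_pos hj]
  have hUmin : ∀ r j, j < Lr (k+1) s r → nmin (u.cell r j) = nmax (s.cell r j) := by
    intro r j hj
    rw [hUcell r j hj]
    exact nmin_insert_of_gt (fun x hx => (Finset.mem_filter.mp hx).2.1)
  have hU3 : ∀ r j, j < Lr (k+1) s r → (u.cell r j).erase (nmin (u.cell r j)) =
      (dep (k+1) s (r + 1)).filter fun y =>
        nmax (s.cell r j) < y ∧ ∀ c < Lr (k+1) s r, j < c → y ≤ nmax (s.cell r c) := by
    intro r j hj
    rw [hUmin r j hj, hUcell r j hj]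
    exact Finset.erase_insert (fun hmem => lt_irrefl _ (Finset.mem_filter.mp hmem).2.1)
  have hU4 : ∀ r, arr u r = dep (k+1) s (r + 1) := by
    intro r
    ext y
    constructor
    · intro hy
      obtain ⟨c, hc, hyc, hylt⟩ := mem_arr.mp hy
      rw [hU0] at hc
      rw [hUcell r c hc] at hyc
      rw [hUmin r c hc] at hylt
      rcases Finset.mem_insert.mp hyc with rfl | hyf
      · omega
      · exact (Finset.mem_filter.mp hyf).1
    · intro hy
      obtain ⟨c0, hc0, hc0lt, _⟩ := dep_lift hlam h hy
      have hb1 : 1 ≤ Lr (k+1) s r := by omega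
      set P : ℕ → Prop := fun c => nmax (s.cell r c) < y with hP
      set b := Lr (k+1) s r - 1 with hbb
      have hc0b : c0 ≤ b := by omega
      have hPg : P (Nat.findGreatest P b) := Nat.findGreatest_spec hc0b hc0lt
      have hgb : Nat.findGreatest P b < Lr (k+1) s r := by
        have := Nat.findGreatest_le (P := P) (n := b)
        omega
      apply mem_arr.mpr
      refine ⟨Nat.findGreatest P b, by rw [hU0]; exact hgb, ?_, ?_⟩
      · rw [hUcell _ _ hgb]
        apply Finset.mem_insert_of_mem
        apply Finset.mem_filter.mpr
        refine ⟨hy, hPg, fun c hc hgc => ?_⟩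
        exact le_of_not_gt (Nat.findGreatest_is_greatest (P := P) (n := b) hgc (by omega))
      · rw [hUmin _ _ hgb]
        exact hPg
  have hU5 : ∀ r j, j < Lr (k+1) s (r+1) →
      inc u (r+1) j = (s.cell (r+1) j).erase (nmax (s.cell (r+1) j)) := by
    intro r j hj
    have hjn : j < s.nu (r+1) := lt_of_lt_of_le hj (Lr_le _ _)
    ext y
    constructor
    · intro hy
      obtain ⟨harr, hbelow, hall⟩ := mem_inc.mp hy
      rw [hU4] at harr
      have hyM : y < nmax (s.cell (r+1) j) := by
        have := hbelow _ (by rw [hUcell (r+1) j hj]; exact Finset.mem_insert_self _ _)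
        exact this
      rcases mem_dep.mp harr with ⟨c, hc, hyc, hylt⟩ | ⟨hk', hyc⟩
      · rcases lt_trichotomy c j with hcj | rfl | hcj
        · exfalso
          obtain ⟨a, ha, hay⟩ := hall c hcj
          rw [hUcell (r+1) c hc] at ha
          have haM : nmax (s.cell (r+1) c) ≤ a := by
            rcases Finset.mem_insert.mp ha with rfl | haf
            · exact le_refl _
            · exact le_of_lt (Finset.mem_filter.mp haf).2.1
          omega
        · exact Finset.mem_erase.mpr ⟨ne_of_lt hylt, hyc⟩
        · exfalso
          have hcn : c < s.nu (r+1) := lt_of_lt_of_le hc (Lr_le _ _)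
          have h1 : nmax (s.cell (r+1) j) ≤ nmin (s.cell (r+1) (j+1)) :=
            nmax_le_nmin_succ h (by omega)
          have h2 : nmin (s.cell (r+1) (j+1)) ≤ nmin (s.cell (r+1) c) :=
            nmin_mono h (by omega) hcn
          have h3 : nmin (s.cell (r+1) c) ≤ y := nmin_le hyc
          omega
      · exfalso
        have h0 := hk'.1
        have hL1 : Lr (k+1) s (r+1) = s.nu (r+1) - 1 := by unfold Lr; rw [if_pos hk']
        have hjcB : j < s.nu (r+1) - 1 := by omega
        have h1 : nmax (s.cell (r+1) j) ≤ nmin (s.cell (r+1) (j+1)) :=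
          nmax_le_nmin_succ h (by omega)
        have h2 : nmin (s.cell (r+1) (j+1)) ≤ nmin (s.cell (r+1) (s.nu (r+1) - 1)) :=
          nmin_mono h (by omega) (by omega)
        have h3 : nmin (s.cell (r+1) (s.nu (r+1) - 1)) ≤ y := nmin_le hyc
        omega
    · intro hy
      obtain ⟨hne, hyc⟩ := Finset.mem_erase.mp hy
      have hylt : y < nmax (s.cell (r+1) j) := lt_nmax_of_mem_ne hyc hne
      apply mem_inc.mpr
      refine ⟨?_, ?_, ?_⟩
      · rw [hU4]
        exact mem_dep.mpr (Or.inl ⟨j, hj, hyc, hylt⟩)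
      · intro a ha
        rw [hUcell (r+1) j hj] at ha
        rcases Finset.mem_insert.mp ha with rfl | haf
        · exact hylt
        · exact lt_trans hylt (Finset.mem_filter.mp haf).2.1
      · intro j' hj'
        refine ⟨nmax (s.cell (r+1) j'), ?_, ?_⟩
        · rw [hUcell (r+1) j' (by omega)]
          exact Finset.mem_insert_self _ _
        · have h1 : nmax (s.cell (r+1) j') ≤ nmin (s.cell (r+1) (j'+1)) :=
            nmax_le_nmin_succ h (by omega)
          have h2 : nmin (s.cell (r+1) (j'+1)) ≤ nmin (s.cell (r+1) j) :=
            nmin_mono h (by omega) hjn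
          have h3 : nmin (s.cell (r+1) j) ≤ y := nmin_le hyc
          omega
  have hU6 : ∀ r, nbox u (r+1) =
      if hasK (k+1) s (r+1) then s.cell (r+1) (s.nu (r+1) - 1) else ∅ := by
    intro r
    ext y
    constructor
    · intro hy
      obtain ⟨harr, hall⟩ := mem_nbox.mp hy
      rw [hU4] at harr
      rcases mem_dep.mp harr with ⟨c, hc, hyc, hylt⟩ | ⟨hk', hyc⟩
      · exfalso
        obtain ⟨a, ha, hay⟩ := hall c (by rw [hU0]; exact hc)
        rw [hUcell (r+1) c hc] at ha
        have haM : nmax (s.cell (r+1) c) ≤ a := by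
          rcases Finset.mem_insert.mp ha with rfl | haf
          · exact le_refl _
          · exact le_of_lt (Finset.mem_filter.mp haf).2.1
        omega
      · rw [if_pos hk']
        exact hyc
    · intro hy
      split_ifs at hy with hk'
      · have h0 := hk'.1
        have hL1 : Lr (k+1) s (r+1) = s.nu (r+1) - 1 := by unfold Lr; rw [if_pos hk']
        apply mem_nbox.mpr
        refine ⟨by rw [hU4]; exact mem_dep.mpr (Or.inr ⟨hk', hy⟩), fun j hj => ?_⟩
        rw [hU0, hL1] at hj
        refine ⟨nmax (s.cell (r+1) j), ?_, ?_⟩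
        · rw [hUcell (r+1) j (by omega)]
          exact Finset.mem_insert_self _ _
        · have h1 : nmax (s.cell (r+1) j) ≤ nmin (s.cell (r+1) (j+1)) :=
            nmax_le_nmin_succ h (by omega)
          have h2 : nmin (s.cell (r+1) (j+1)) ≤ nmin (s.cell (r+1) (s.nu (r+1) - 1)) :=
            nmin_mono h (by omega) (by omega)
          have h3 : nmin (s.cell (r+1) (s.nu (r+1) - 1)) ≤ y := nmin_le hy
          omega
      · exact absurd hy (Finset.notMem_empty y)
  have hK0 : ¬ hasK (k+1) s 0 := by
    rintro ⟨hpos, hlab⟩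
    by_cases hli : lam 0 ≤ s.nu 0 - 1
    · have := (h.labIn 0 _ hli (by omega)).2.1
      omega
    · have := h.labOut 0 (s.nu 0 - 1) (Or.inl (by omega))
      omega
  have hL0 : Lr (k+1) s 0 = s.nu 0 := by unfold Lr; rw [if_neg hK0]; omega
  have hflat : ∀ j, j < s.nu 0 → s.cell 0 j = {nmax (s.cell 0 j)} := by
    intro j hj
    ext x
    simp only [Finset.mem_singleton]
    constructor
    · intro hx
      by_contra hne
      exact absurd (h.deep 0 j x _ hx (nmax_mem ⟨x, hx⟩) (lt_nmax_of_mem_ne hx hne)) (by omega)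
    · rintro rfl
      exact nmax_mem (h.nonempty 0 j hj)
  have hboxK : ∀ r, hasK (k+1) s (r+1) → (nbox u (r+1)).Nonempty := by
    intro r hk'
    rw [hU6, if_pos hk']
    exact h.nonempty (r+1) _ (by have := hk'.1; omega)
  have hboxnK : ∀ r, ¬ hasK (k+1) s (r+1) → ¬ (nbox u (r+1)).Nonempty := by
    intro r hk' hne
    rw [hU6, if_neg hk'] at hne
    exact absurd hne (by simp)
  apply St.ext
  · funext r
    cases r with
    | zero =>
      show u.nu 0 + _ = s.nu 0
      rw [show nbox u 0 = ∅ from rfl]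
      simp only [Finset.not_nonempty_empty, if_false]
      rw [hU0, hL0]
      omega
    | succ n =>
      show u.nu (n+1) + _ = s.nu (n+1)
      by_cases hk' : hasK (k+1) s (n+1)
      · rw [if_pos (hboxK n hk')]
        rw [hU0]
        have h0 := hk'.1
        have : Lr (k+1) s (n+1) = s.nu (n+1) - 1 := by unfold Lr; rw [if_pos hk']
        omega
      · rw [if_neg (hboxnK n hk')]
        rw [hU0]
        have : Lr (k+1) s (n+1) = s.nu (n+1) := by unfold Lr; rw [if_neg hk']; omega
        omega
  · funext r j
    show (if j < u.nu r then insert (nmin (u.cell r j)) (inc u r j)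
        else if j = u.nu r ∧ (nbox u r).Nonempty then nbox u r else ∅) = s.cell r j
    cases r with
    | zero =>
      rw [show nbox u 0 = ∅ from rfl]
      by_cases hj : j < s.nu 0
      · rw [if_pos (by rw [hU0, hL0]; exact hj)]
        rw [show inc u 0 j = ∅ from rfl]
        rw [hUmin 0 j (by rw [hL0]; exact hj)]
        rw [hflat j hj]
        rfl
      · rw [if_neg (by rw [hU0, hL0]; exact hj)]
        rw [if_neg (by simp)]
        exact (h.outside 0 j (by omega)).symm
    | succ n =>
      by_cases hk' : hasK (k+1) s (n+1)
      · have h0 := hk'.1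
        have hL1 : Lr (k+1) s (n+1) = s.nu (n+1) - 1 := by unfold Lr; rw [if_pos hk']
        rcases lt_trichotomy j (Lr (k+1) s (n+1)) with hj | hj | hj
        · rw [if_pos (by rw [hU0]; exact hj)]
          rw [hUmin (n+1) j hj, hU5 n j hj]
          exact Finset.insert_erase (nmax_mem (h.nonempty (n+1) j (by omega)))
        · rw [if_neg (by rw [hU0]; omega)]
          rw [if_pos ⟨by rw [hU0]; omega, hboxK n hk'⟩]
          rw [hU6, if_pos hk']
          congr 1
          omega
        · rw [if_neg (by rw [hU0]; omega)]
          rw [if_neg (by rw [hU0]; rintro ⟨he, _⟩; omega)]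
          exact (h.outside (n+1) j (by omega)).symm
      · have hL1 : Lr (k+1) s (n+1) = s.nu (n+1) := by unfold Lr; rw [if_neg hk']; omega
        by_cases hj : j < s.nu (n+1)
        · rw [if_pos (by rw [hU0, hL1]; exact hj)]
          rw [hUmin (n+1) j (by omega), hU5 n j (by omega)]
          exact Finset.insert_erase (nmax_mem (h.nonempty (n+1) j hj))
        · rw [if_neg (by rw [hU0, hL1]; exact hj)]
          rw [if_neg (fun hc => (hboxnK n hk') hc.2)]
          exact (h.outside (n+1) j (by omega)).symm
  · funext r j
    show (if j = u.nu r ∧ (nbox u r).Nonempty then k + 1 else u.lab r j) = s.lab r j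
    have hulab : ∀ j', u.lab r j' = if j' < Lr (k+1) s r then s.lab r j' else 0 := by
      intro j'
      simp only [hu, rev]
    cases r with
    | zero =>
      rw [show nbox u 0 = ∅ from rfl]
      rw [if_neg (by simp)]
      rw [hulab, hL0]
      by_cases hj : j < s.nu 0
      · rw [if_pos hj]
      · rw [if_neg hj]
        exact (h.labOut 0 j (Or.inr (by omega))).symm
    | succ n =>
      by_cases hk' : hasK (k+1) s (n+1)
      · have h0 := hk'.1
        have hL1 : Lr (k+1) s (n+1) = s.nu (n+1) - 1 := by unfold Lr; rw [if_pos hk']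
        rcases lt_trichotomy j (Lr (k+1) s (n+1)) with hj | hj | hj
        · rw [if_neg (by rw [hU0]; rintro ⟨he, _⟩; omega)]
          rw [hulab, if_pos hj]
        · rw [if_pos ⟨by rw [hU0]; omega, hboxK n hk'⟩]
          have := hk'.2
          rw [show j = s.nu (n+1) - 1 by omega]
          omega
        · rw [if_neg (by rw [hU0]; rintro ⟨he, _⟩; omega)]
          rw [hulab, if_neg (by omega)]
          exact (h.labOut (n+1) j (Or.inr (by omega))).symm
      · have hL1 : Lr (k+1) s (n+1) = s.nu (n+1) := by unfold Lr; rw [if_neg hk']; omega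
        rw [if_neg (fun hc => (hboxnK n hk') hc.2)]
        rw [hulab, hL1]
        by_cases hj : j < s.nu (n+1)
        · rw [if_pos hj]
        · rw [if_neg hj]
          exact (h.labOut (n+1) j (Or.inr (by omega))).symm



theorem rev_fwd {lam : ℕ → ℕ} {k : ℕ} {s : St} (h : Valid lam k s) :
    rev (k + 1) (fwd (k + 1) s) = s := by
  set t := fwd (k + 1) s with ht
  -- cells of t inside the old shape
  have hcell : ∀ r j, j < s.nu r → t.cell r j = insert (nmin (s.cell r j)) (inc s r j) := by
    intro r j hj
    simp only [ht, fwd]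
    rw [if_pos hj]
  have hinc_lt : ∀ r j, j < s.nu r → ∀ x ∈ inc s r j, x < nmin (s.cell r j) := by
    intro r j hj x hxi
    cases r with
    | zero => exact absurd hxi (by simp [inc_zero])
    | succ n => exact (mem_inc.mp hxi).2.1 _ (nmin_mem (h.nonempty _ j hj))
  have hmax : ∀ r j, j < s.nu r → nmax (t.cell r j) = nmin (s.cell r j) := by
    intro r j hj
    rw [hcell r j hj]
    exact nmax_insert_of_lt (hinc_lt r j hj)
  -- hasK of t
  have hK : ∀ r, hasK (k+1) t r ↔ (nbox s r).Nonempty := by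
    intro r
    constructor
    · rintro ⟨hpos, hlab⟩
      by_contra hb
      have hnu : t.nu r = s.nu r := by simp only [ht, fwd]; rw [if_neg hb]; omega
      have hlt : t.nu r - 1 < s.nu r := by omega
      have hlab' : t.lab r (t.nu r - 1) = s.lab r (t.nu r - 1) := by
        simp only [ht, fwd]
        rw [if_neg (fun hc => hb hc.2)]
      rw [hlab'] at hlab
      by_cases hli : lam r ≤ t.nu r - 1
      · have := (h.labIn r _ hli hlt).2.2
        omega
      · have := h.labOut r (t.nu r - 1) (Or.inl (by omega))
        omega
    · intro hb
      have hnu : t.nu r = s.nu r + 1 := by simp only [ht, fwd]; rw [if_pos hb]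
      refine ⟨by omega, ?_⟩
      have : t.nu r - 1 = s.nu r := by omega
      rw [this]
      simp only [ht, fwd]
      split_ifs with hc
      · rfl
      · exact absurd ⟨by trivial, hb⟩ hc
  have hL : ∀ r, Lr (k+1) t r = s.nu r := by
    intro r
    unfold Lr
    by_cases hb : (nbox s r).Nonempty
    · rw [if_pos ((hK r).mpr hb)]
      have : t.nu r = s.nu r + 1 := by simp only [ht, fwd]; rw [if_pos hb]
      omega
    · rw [if_neg (fun hc => hb ((hK r).mp hc))]
      have : t.nu r = s.nu r := by simp only [ht, fwd]; rw [if_neg hb]; omega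
      omega
  have hdep : ∀ r, dep (k+1) t (r+1) = arr s r := by
    intro r
    ext x
    constructor
    · intro hx
      rcases mem_dep.mp hx with ⟨c, hc, hxc, hxlt⟩ | ⟨hk', hxc⟩
      · rw [hL] at hc
        rw [hcell _ c hc] at hxc
        rw [hmax _ c hc] at hxlt
        rcases Finset.mem_insert.mp hxc with rfl | hxi
        · omega
        · cases c with
          | zero => exact (mem_inc.mp hxi).1
          | succ m => exact (mem_inc.mp hxi).1
      · have hb := (hK (r+1)).mp hk'
        have hnu : t.nu (r+1) = s.nu (r+1) + 1 := by simp only [ht, fwd]; rw [if_pos hb]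
        have he : t.nu (r+1) - 1 = s.nu (r+1) := by omega
        rw [he] at hxc
        have : t.cell (r+1) (s.nu (r+1)) = nbox s (r+1) := by
          simp only [ht, fwd]
          rw [if_neg (lt_irrefl _)]
          split_ifs with hc
          · rfl
          · exact absurd ⟨by trivial, hb⟩ hc
        rw [this] at hxc
        cases hr : r with
        | zero => subst hr; exact (mem_nbox.mp hxc).1
        | succ m => subst hr; exact (mem_nbox.mp hxc).1
    · intro hx
      rcases arr_place h hx with ⟨j, hj, hji⟩ | hjb
      · apply mem_dep.mpr
        left
        refine ⟨j, by rw [hL]; exact hj, ?_, ?_⟩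
        · rw [hcell _ j hj]
          exact Finset.mem_insert_of_mem hji
        · rw [hmax _ j hj]
          exact (mem_inc.mp hji).2.1 _ (nmin_mem (h.nonempty _ j hj))
      · apply mem_dep.mpr
        right
        have hb : (nbox s (r+1)).Nonempty := ⟨x, hjb⟩
        have hnu : t.nu (r+1) = s.nu (r+1) + 1 := by simp only [ht, fwd]; rw [if_pos hb]
        refine ⟨(hK (r+1)).mpr hb, ?_⟩
        have he : t.nu (r+1) - 1 = s.nu (r+1) := by omega
        rw [he]
        have : t.cell (r+1) (s.nu (r+1)) = nbox s (r+1) := by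
          simp only [ht, fwd]
          rw [if_neg (lt_irrefl _)]
          split_ifs with hc
          · rfl
          · exact absurd ⟨by trivial, hb⟩ hc
        rw [this]
        exact hjb
  apply St.ext
  · funext r
    simp only [rev]
    exact hL r
  · funext r j
    simp only [rev]
    by_cases hj : j < s.nu r
    · rw [if_pos (by rw [hL]; exact hj)]
      ext x
      simp only [Finset.mem_insert, Finset.mem_filter]
      constructor
      · rintro (rfl | ⟨hxd, hgt, hall⟩)
        · rw [hmax r j hj]
          exact nmin_mem (h.nonempty r j hj)
        · rw [hdep] at hxd
          obtain ⟨c, hc, hxc, hmc⟩ := mem_arr.mp hxd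
          rw [hmax r j hj] at hgt
          rcases lt_trichotomy c j with hcj | rfl | hcj
          · exfalso
            have : x ≤ nmin (s.cell r j) := by
              have h1 : x ≤ nmin (s.cell r (c+1)) := le_nmin_succ h (by omega) hxc
              exact le_trans h1 (nmin_mono h (by omega) hj)
            omega
          · exact hxc
          · exfalso
            have := hall c (by rw [hL]; exact hc) hcj
            rw [hmax r c hc] at this
            omega
      · intro hx
        by_cases hxm : x = nmin (s.cell r j)
        · left
          rw [hmax r j hj]
          exact hxm
        · right
          have hlt : nmin (s.cell r j) < x := lt_of_le_of_ne (nmin_le hx) (Ne.symm hxm)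
          refine ⟨by rw [hdep]; exact mem_arr.mpr ⟨j, hj, hx, hlt⟩, ?_, ?_⟩
          · rw [hmax r j hj]; exact hlt
          · intro c hc hjc
            rw [hL] at hc
            rw [hmax r c hc]
            exact le_trans (le_nmin_succ h (by omega) hx) (nmin_mono h (by omega) hc)
    · rw [if_neg (by rw [hL]; exact hj)]
      exact (h.outside r j (by omega)).symm
  · funext r j
    simp only [rev]
    by_cases hj : j < s.nu r
    · rw [if_pos (by rw [hL]; exact hj)]
      simp only [ht, fwd]
      rw [if_neg (fun hc : j = s.nu r ∧ (nbox s r).Nonempty => absurd hc.1 (by omega))]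
    · rw [if_neg (by rw [hL]; exact hj)]
      exact (h.labOut r j (Or.inr (by omega))).symm


/-! ### Iterated rounds -/

def Fwd : ℕ → St → St
  | 0, s => s
  | n + 1, s => fwd (n + 1) (Fwd n s)

def Rev : ℕ → St → St
  | 0, s => s
  | n + 1, s => Rev n (rev (n + 1) s)

section Iterates

variable {lam : ℕ → ℕ}

lemma Fwd_valid {s : St} (h : Valid lam 0 s) (n : ℕ) : Valid lam n (Fwd n s) := by
  induction n with
  | zero => exact h
  | succ m ih => exact fwd_valid ih

lemma Fwd_content {s : St} (h : Valid lam 0 s) (n : ℕ) {v : ℕ} (hv : 1 ≤ v) :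
    (Fwd n s).content v = s.content v := by
  induction n with
  | zero => rfl
  | succ m ih => rw [show Fwd (m+1) s = fwd (m+1) (Fwd m s) from rfl,
      fwd_content (Fwd_valid h m) v hv, ih]

lemma Rev_valid (hlam : IsPartitionFn lam) {s : St} (n : ℕ) (h : Valid lam n s) :
    Valid lam 0 (Rev n s) := by
  induction n generalizing s with
  | zero => exact h
  | succ m ih => exact ih (rev_valid hlam h)

lemma rev_content (hlam : IsPartitionFn lam) {k : ℕ} {s : St} (h : Valid lam (k+1) s)
    {v : ℕ} (hv : 1 ≤ v) : (rev (k+1) s).content v = s.content v := by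
  conv_rhs => rw [← fwd_rev hlam h]
  exact (fwd_content (rev_valid hlam h) v hv).symm

lemma Rev_content (hlam : IsPartitionFn lam) {s : St} (n : ℕ) (h : Valid lam n s)
    {v : ℕ} (hv : 1 ≤ v) : (Rev n s).content v = s.content v := by
  induction n generalizing s with
  | zero => rfl
  | succ m ih =>
    rw [show Rev (m+1) s = Rev m (rev (m+1) s) from rfl,
      ih (rev_valid hlam h), rev_content hlam h hv]

lemma Rev_Fwd {s : St} (h : Valid lam 0 s) (n : ℕ) : Rev n (Fwd n s) = s := by
  induction n with
  | zero => rfl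
  | succ m ih =>
    show Rev m (rev (m+1) (fwd (m+1) (Fwd m s))) = s
    rw [rev_fwd (Fwd_valid h m), ih]

lemma Fwd_Rev (hlam : IsPartitionFn lam) {s : St} (n : ℕ) (h : Valid lam n s) :
    Fwd n (Rev n s) = s := by
  induction n generalizing s with
  | zero => rfl
  | succ m ih =>
    show fwd (m+1) (Fwd m (Rev m (rev (m+1) s))) = s
    rw [ih (rev_valid hlam h), fwd_rev hlam h]

/-! ### consequences of validity -/

lemma row_lower {k : ℕ} {s : St} (h : Valid lam k s) :
    ∀ i j a, j < s.nu i → a ∈ s.cell i j → i + 1 ≤ a := by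
  intro i
  induction i with
  | zero => exact fun j a hj ha => h.pos 0 j a ha
  | succ n ih =>
    intro j a hj ha
    have hjn : j < s.nu n := lt_of_lt_of_le hj (h.mono n (n+1) (Nat.le_succ n))
    obtain ⟨b, hb⟩ := h.nonempty n j hjn
    have h1 := ih j b hjn hb
    have h2 := h.cols n j hj b hb a ha
    omega

lemma contentSet_finite {k : ℕ} {s : St} (h : Valid lam k s) (v : ℕ) :
    {p : ℕ × ℕ | p.2 < s.nu p.1 ∧ v ∈ s.cell p.1 p.2}.Finite := by
  obtain ⟨N, hN⟩ := h.bdd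
  apply Set.Finite.subset ((Set.finite_Iio N).prod (Set.finite_Iio (s.nu 0)))
  rintro ⟨i, j⟩ ⟨hj, _⟩
  constructor
  · by_contra hi
    simp only [Set.mem_Iio, not_lt] at hi
    rw [hN i hi] at hj
    omega
  · exact Set.mem_Iio.mpr (lt_of_lt_of_le hj (h.mono 0 i (Nat.zero_le i)))

lemma content_pos {k : ℕ} {s : St} (h : Valid lam k s) {i j v : ℕ} (hj : j < s.nu i)
    (hv : v ∈ s.cell i j) : s.content v ≠ 0 := by
  have := (Set.ncard_pos (contentSet_finite h v)).mpr ⟨(i, j), hj, hv⟩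
  rw [St.content]
  omega

/-- in a state whose content vanishes from `N` on, any occupied row `i` satisfies `i + 2 ≤ N` -/
lemma occupied_bound {k N : ℕ} {δ : ℕ → ℕ} {s : St} (h : Valid lam k s)
    (hcont : ∀ v, 1 ≤ v → s.content v = δ v) (hδ : ∀ v, N ≤ v → δ v = 0) :
    ∀ i, 0 < s.nu i → i + 2 ≤ N := by
  intro i hi
  obtain ⟨a, ha⟩ := h.nonempty i 0 hi
  have h1 := row_lower h i 0 a hi ha
  have h2 := content_pos h hi ha
  rw [hcont a (by omega)] at h2
  by_contra hc
  exact h2 (hδ a (by omega))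

/-- at stage `N`, all cells are singletons -/
lemma stage_singleton {N : ℕ} {δ : ℕ → ℕ} {s : St} (h : Valid lam N s)
    (hcont : ∀ v, 1 ≤ v → s.content v = δ v) (hδ : ∀ v, N ≤ v → δ v = 0) :
    ∀ i j, j < s.nu i → s.cell i j = {nmin (s.cell i j)} := by
  intro i j hj
  ext x
  simp only [Finset.mem_singleton]
  constructor
  · intro hx
    by_contra hne
    have hlt : nmin (s.cell i j) < x := lt_of_le_of_ne (nmin_le hx) (Ne.symm hne)
    have hdeep : N ≤ i := h.deep i j _ _ (nmin_mem ⟨x, hx⟩) hx hlt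
    have h1 := row_lower h i j x hj hx
    have h2 := content_pos h hj hx
    rw [hcont x (by omega)] at h2
    exact h2 (hδ x (by omega))
  · rintro rfl
    exact nmin_mem (h.nonempty i j hj)

end Iterates

/-! ### interface with the pinned structures -/

lemma SVYT_ext {lam : ℕ → ℕ} {F G : SVYT lam} (h : F.box = G.box) : F = G := by
  cases F; cases G; congr

lemma SSYT_ext {mu : ℕ → ℕ} {T U : SSYT mu} (h : T.entry = U.entry) : T = U := by
  cases T; cases U; congr

lemma LF_ext {lam mu : ℕ → ℕ} {g g' : LenartFilling lam mu} (h : g.entry = g'.entry) :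
    g = g' := by
  cases g; cases g'; congr

lemma ssyt_chain {mu : ℕ → ℕ} (hmu : IsPartitionFn mu) (T : SSYT mu) :
    ∀ i j, j < mu i → i + 1 ≤ T.entry i j := by
  intro i
  induction i with
  | zero => exact fun j hj => T.pos 0 j hj
  | succ n ih =>
    intro j hj
    have hjn : j < mu n := lt_of_lt_of_le hj (hmu.1 n (n+1) (Nat.le_succ n))
    have h1 := T.cols n j hj
    have h2 := ih j hjn
    omega

lemma ssyt_content_finite {mu : ℕ → ℕ} (hmu : IsPartitionFn mu) (T : SSYT mu) (v : ℕ) :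
    {p : ℕ × ℕ | p.2 < mu p.1 ∧ T.entry p.1 p.2 = v}.Finite := by
  obtain ⟨N, hN⟩ := hmu.2
  apply Set.Finite.subset ((Set.finite_Iio N).prod (Set.finite_Iio (mu 0)))
  rintro ⟨i, j⟩ ⟨hj, _⟩
  constructor
  · by_contra hi
    simp only [Set.mem_Iio, not_lt] at hi
    rw [hN i hi] at hj
    omega
  · exact Set.mem_Iio.mpr (lt_of_lt_of_le hj (hmu.1 0 i (Nat.zero_le i)))

lemma ssyt_occupied {mu δ : ℕ → ℕ} {N : ℕ} (hmu : IsPartitionFn mu) (T : SSYT mu)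
    (hcont : ∀ v, 1 ≤ v → T.content v = δ v) (hδ : ∀ v, N ≤ v → δ v = 0) :
    ∀ i, 0 < mu i → i + 2 ≤ N := by
  intro i hi
  have h1 := ssyt_chain hmu T i 0 hi
  have h2 : T.content (T.entry i 0) ≠ 0 := by
    have := (Set.ncard_pos (ssyt_content_finite hmu T (T.entry i 0))).mpr
      ⟨(i, 0), hi, rfl⟩
    rw [SSYT.content]
    omega
  rw [hcont _ (by omega)] at h2
  by_contra hc
  exact h2 (hδ _ (by omega))

/-! ### the three equivalences -/

section Equivs

variable {lam δ : ℕ → ℕ}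

/-- stage 0 validity forces the shape to be `lam` -/
lemma valid0_nu {s : St} (h : Valid lam 0 s) : s.nu = lam := by
  funext i
  by_contra hne
  have hlt : lam i < s.nu i := lt_of_le_of_ne (h.contains i) (Ne.symm hne)
  have := (h.labIn i (lam i) (le_refl _) hlt).2.2
  have := (h.labIn i (lam i) (le_refl _) hlt).1
  omega

def E1 (hlam : IsPartitionFn lam) :
    {F : SVYT lam // ∀ v : ℕ, 1 ≤ v → F.content v = δ v} ≃
      {s : St // Valid lam 0 s ∧ ∀ v : ℕ, 1 ≤ v → s.content v = δ v} where
  toFun F := ⟨⟨lam, F.1.box, fun _ _ => 0⟩,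
    ⟨hlam.1, hlam.2, fun i => le_refl _, F.1.nonempty, F.1.pos, F.1.outside,
      F.1.rows, F.1.cols,
      fun i j h1 h2 => absurd (show j < lam i from h2) (by omega),
      fun _ _ _ => rfl,
      fun i j h1 h2 => absurd (show j + 1 < lam i from h2) (by omega),
      fun i j h1 h2 h3 => by
        have h3' : j < lam (i+1) := h3
        have := hlam.1 i (i+1) (Nat.le_succ i)
        omega,
      fun _ _ _ _ _ _ _ => Nat.zero_le _⟩,
    F.2⟩
  invFun s := ⟨⟨s.1.cell,
      fun i j hj => s.2.1.nonempty i j (by rw [valid0_nu s.2.1]; exact hj),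
      s.2.1.pos,
      fun i j hj => s.2.1.outside i j (by rw [valid0_nu s.2.1]; exact hj),
      fun i j hj => s.2.1.rows i j (by rw [valid0_nu s.2.1]; exact hj),
      fun i j hj => s.2.1.cols i j (by rw [valid0_nu s.2.1]; exact hj)⟩,
    by
      intro v hv
      have h2 := s.2.2 v hv
      rw [← h2]
      show _ = s.1.content v
      rw [SVYT.content, St.content]
      simp only [valid0_nu s.2.1]⟩
  left_inv F := Subtype.ext (SVYT_ext rfl)
  right_inv s := by
    apply Subtype.ext
    apply St.ext
    · exact (valid0_nu s.2.1).symm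
    · rfl
    · funext i j
      by_cases hj : j < lam i
      · exact (s.2.1.labOut i j (Or.inl hj)).symm
      · exact (s.2.1.labOut i j (Or.inr (by rw [valid0_nu s.2.1]; omega))).symm

def E2 (hlam : IsPartitionFn lam) (N : ℕ) :
    {s : St // Valid lam 0 s ∧ ∀ v : ℕ, 1 ≤ v → s.content v = δ v} ≃
      {s : St // Valid lam N s ∧ ∀ v : ℕ, 1 ≤ v → s.content v = δ v} where
  toFun s := ⟨Fwd N s.1, Fwd_valid s.2.1 N,
    fun v hv => by rw [Fwd_content s.2.1 N hv]; exact s.2.2 v hv⟩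
  invFun s := ⟨Rev N s.1, Rev_valid hlam N s.2.1,
    fun v hv => by rw [Rev_content hlam N s.2.1 hv]; exact s.2.2 v hv⟩
  left_inv s := Subtype.ext (Rev_Fwd s.2.1 N)
  right_inv s := Subtype.ext (Fwd_Rev hlam N s.2.1)

end Equivs

lemma nmin_singleton (a : ℕ) : nmin ({a} : Finset ℕ) = a := by
  rw [nmin, dif_pos ⟨a, Finset.mem_singleton_self a⟩]
  exact Finset.min'_singleton a

lemma sigma_mk_eq {α : Type*} {P : α → Prop} {G : α → Type _} {a : α} (ha ha' : P a)
    {b b' : G a} (hb : b = b') :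
    (⟨⟨a, ha⟩, b⟩ : Σ x : Subtype P, G x.1) = ⟨⟨a, ha'⟩, b'⟩ := by cases hb; rfl

section E3sec

variable {lam δ : ℕ → ℕ}

def E3 (hlam : IsPartitionFn lam) {N : ℕ} (hδ : ∀ v, N ≤ v → δ v = 0) :
    {s : St // Valid lam N s ∧ ∀ v : ℕ, 1 ≤ v → s.content v = δ v} ≃
      Σ mu : {m : ℕ → ℕ // IsPartitionFn m ∧ ∀ i, lam i ≤ m i},
        (LenartFilling lam mu.1 ×
          {T : SSYT mu.1 // ∀ v : ℕ, 1 ≤ v → T.content v = δ v}) where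
  toFun s :=
    ⟨⟨s.1.nu, ⟨s.2.1.mono, s.2.1.bdd⟩, s.2.1.contains⟩,
      ⟨s.1.lab, s.2.1.labOut,
        fun i j h1 h2 => ⟨(s.2.1.labIn i j h1 h2).1, (s.2.1.labIn i j h1 h2).2.1⟩,
        s.2.1.labRow,
        fun i j h1 h2 h3 h4 => s.2.1.labCol i j h1 h2 h4⟩,
      ⟨⟨fun i j => if j < s.1.nu i then nmin (s.1.cell i j) else 0,
        fun i j hj => by
          dsimp only at hj ⊢
          rw [if_pos hj]
          exact s.2.1.pos i j _ (nmin_mem (s.2.1.nonempty i j hj)),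
        fun i j hj => by
          dsimp only at hj ⊢
          rw [if_neg (not_lt.mpr hj)],
        fun i j hj => by
          dsimp only at hj ⊢
          rw [if_pos (by omega : j < s.1.nu i), if_pos hj]
          exact s.2.1.rows i j hj _ (nmin_mem (s.2.1.nonempty i j (by omega))) _
            (nmin_mem (s.2.1.nonempty i (j+1) hj)),
        fun i j hj => by
          dsimp only at hj ⊢
          have hji : j < s.1.nu i := lt_of_lt_of_le hj (s.2.1.mono i (i+1) (Nat.le_succ i))
          rw [if_pos hji, if_pos hj]
          exact s.2.1.cols i j hj _ (nmin_mem (s.2.1.nonempty i j hji)) _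
            (nmin_mem (s.2.1.nonempty (i+1) j hj))⟩,
        by
          intro v hv
          rw [← s.2.2 v hv, SSYT.content, St.content]
          congr 1
          ext ⟨i, j⟩
          simp only [Set.mem_setOf_eq]
          constructor
          · rintro ⟨hj, he⟩
            rw [if_pos hj] at he
            exact ⟨hj, he ▸ nmin_mem (s.2.1.nonempty i j hj)⟩
          · rintro ⟨hj, hm⟩
            refine ⟨hj, ?_⟩
            rw [if_pos hj]
            rw [stage_singleton s.2.1 s.2.2 hδ i j hj] at hm
            exact (Finset.mem_singleton.mp hm).symm⟩⟩
  invFun x :=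
    ⟨⟨x.1.1, fun i j => if j < x.1.1 i then {x.2.2.1.entry i j} else ∅, x.2.1.entry⟩,
      ⟨x.1.2.1.1, x.1.2.1.2, x.1.2.2,
        fun i j hj => by
          dsimp only at hj ⊢
          rw [if_pos hj]
          exact ⟨_, Finset.mem_singleton_self _⟩,
        fun i j e he => by
          dsimp only at he
          split_ifs at he with hj
          · rw [Finset.mem_singleton.mp he]
            exact x.2.2.1.pos i j hj
          · exact absurd he (Finset.notMem_empty e),
        fun i j hj => by
          dsimp only at hj ⊢
          rw [if_neg (not_lt.mpr hj)],
        fun i j hj a ha b hb => by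
          dsimp only at hj ha hb
          rw [if_pos (by omega : j < x.1.1 i)] at ha
          rw [if_pos hj] at hb
          rw [Finset.mem_singleton.mp ha, Finset.mem_singleton.mp hb]
          exact x.2.2.1.rows i j hj,
        fun i j hj a ha b hb => by
          dsimp only at hj ha hb
          have hji : j < x.1.1 i := lt_of_lt_of_le hj (x.1.2.1.1 i (i+1) (Nat.le_succ i))
          rw [if_pos hji] at ha
          rw [if_pos hj] at hb
          rw [Finset.mem_singleton.mp ha, Finset.mem_singleton.mp hb]
          exact x.2.2.1.cols i j hj,
        fun i j h1 h2 => by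
          dsimp only at h1 h2 ⊢
          refine ⟨(x.2.1.rowBound i j h1 h2).1, (x.2.1.rowBound i j h1 h2).2, ?_⟩
          have hocc := ssyt_occupied x.1.2.1 x.2.2.1 x.2.2.2 hδ i (by omega)
          have := (x.2.1.rowBound i j h1 h2).2
          omega,
        x.2.1.outside, x.2.1.rows,
        fun i j h1 h2 h3 =>
          x.2.1.cols i j h1 h2 (lt_of_lt_of_le h3 (x.1.2.1.1 i (i+1) (Nat.le_succ i))) h3,
        fun i j a b ha hb hab => by
          dsimp only at ha hb
          split_ifs at ha hb with hj
          · rw [Finset.mem_singleton.mp ha, Finset.mem_singleton.mp hb] at hab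
            exact absurd hab (lt_irrefl _)
          · exact absurd ha (Finset.notMem_empty a)⟩,
      by
        intro v hv
        rw [← x.2.2.2 v hv, SSYT.content, St.content]
        congr 1
        ext ⟨i, j⟩
        simp only [Set.mem_setOf_eq]
        constructor
        · rintro ⟨hj, hm⟩
          rw [if_pos hj] at hm
          exact ⟨hj, (Finset.mem_singleton.mp hm).symm⟩
        · rintro ⟨hj, he⟩
          refine ⟨hj, ?_⟩
          rw [if_pos hj]
          exact Finset.mem_singleton.mpr he.symm⟩
  left_inv s := by
    apply Subtype.ext
    apply St.ext
    · rfl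
    · funext i j
      show (if j < s.1.nu i then ({(if j < s.1.nu i then nmin (s.1.cell i j) else 0)} :
          Finset ℕ) else ∅) = s.1.cell i j
      by_cases hj : j < s.1.nu i
      · rw [if_pos hj, if_pos hj]
        exact (stage_singleton s.2.1 s.2.2 hδ i j hj).symm
      · rw [if_neg hj]
        exact (s.2.1.outside i j (by omega)).symm
    · rfl
  right_inv x := by
    obtain ⟨⟨muv, mup⟩, g, T⟩ := x
    show (⟨⟨muv, _⟩, _, _⟩ : Σ mu : {m : ℕ → ℕ // IsPartitionFn m ∧ ∀ i, lam i ≤ m i},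
        (LenartFilling lam mu.1 ×
          {T : SSYT mu.1 // ∀ v : ℕ, 1 ≤ v → T.content v = δ v})) = ⟨⟨muv, mup⟩, g, T⟩
    refine sigma_mk_eq (G := fun m => LenartFilling lam m ×
      {T : SSYT m // ∀ v : ℕ, 1 ≤ v → T.content v = δ v}) _ _ ?_
    apply Prod.ext
    · exact LF_ext rfl
    · apply Subtype.ext
      apply SSYT_ext
      funext i j
      show (if j < muv i then nmin (if j < muv i then ({T.1.entry i j} : Finset ℕ) else ∅)
          else 0) = T.1.entry i j
      by_cases hj : j < muv i
      · rw [if_pos hj, if_pos hj, nmin_singleton]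
      · rw [if_neg hj]
        exact (T.1.outside i j (show muv i ≤ j by omega)).symm

end E3sec

/-! ### finiteness -/

section Fin

variable {lam δ : ℕ → ℕ}

lemma lf_entry_le {mu : ℕ → ℕ} (g : LenartFilling lam mu) (i j : ℕ) : g.entry i j ≤ i := by
  by_cases h1 : lam i ≤ j
  · by_cases h2 : j < mu i
    · exact (g.rowBound i j h1 h2).2
    · rw [g.outside i j (Or.inr (by omega))]
      omega
  · rw [g.outside i j (Or.inl (by omega))]
    omega

lemma lf_finite {mu : ℕ → ℕ} (hmu : IsPartitionFn mu) : Finite (LenartFilling lam mu) := by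
  obtain ⟨R, hR⟩ := hmu.2
  apply Finite.of_injective
    (f := fun (g : LenartFilling lam mu) (p : Fin (R + 1) × Fin (mu 0 + 1)) =>
      (⟨g.entry p.1 p.2, by have := lf_entry_le g p.1 p.2; omega⟩ : Fin (R + 1)))
  intro g1 g2 heq
  apply LF_ext
  funext i j
  by_cases hi : i ≤ R
  · by_cases hj : j ≤ mu 0
    · have := congrFun heq (⟨i, by omega⟩, ⟨j, by omega⟩)
      exact congrArg Fin.val this
    · have hout : mu i ≤ j := le_trans (hmu.1 0 i (Nat.zero_le i)) (by omega)
      rw [g1.outside i j (Or.inr hout), g2.outside i j (Or.inr hout)]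
  · have hout : mu i ≤ j := by rw [hR i (by omega)]; omega
    rw [g1.outside i j (Or.inr hout), g2.outside i j (Or.inr hout)]

lemma ssyt_entry_lt {mu : ℕ → ℕ} {N : ℕ} (hmu : IsPartitionFn mu) (T : SSYT mu)
    (hcont : ∀ v, 1 ≤ v → T.content v = δ v) (hδ : ∀ v, N ≤ v → δ v = 0)
    {i j : ℕ} (hj : j < mu i) : T.entry i j < N := by
  have hpos := T.pos i j hj
  have h2 : T.content (T.entry i j) ≠ 0 := by
    have := (Set.ncard_pos (ssyt_content_finite hmu T (T.entry i j))).mpr ⟨(i, j), hj, rfl⟩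
    rw [SSYT.content]
    omega
  rw [hcont _ hpos] at h2
  by_contra hc
  exact h2 (hδ _ (by omega))

lemma ssytδ_finite {mu : ℕ → ℕ} {N : ℕ} (hmu : IsPartitionFn mu)
    (hδ : ∀ v, N ≤ v → δ v = 0) :
    Finite {T : SSYT mu // ∀ v : ℕ, 1 ≤ v → T.content v = δ v} := by
  obtain ⟨R, hR⟩ := hmu.2
  apply Finite.of_injective
    (f := fun (T : {T : SSYT mu // ∀ v : ℕ, 1 ≤ v → T.content v = δ v})
      (p : Fin (R + 1) × Fin (mu 0 + 1)) =>
      (⟨T.1.entry p.1 p.2, by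
        by_cases hj : (p.2 : ℕ) < mu p.1
        · have := ssyt_entry_lt hmu T.1 T.2 hδ hj
          omega
        · rw [T.1.outside p.1 p.2 (by omega)]
          omega⟩ : Fin (N + 1)))
  intro T1 T2 heq
  apply Subtype.ext
  apply SSYT_ext
  funext i j
  by_cases hi : i ≤ R
  · by_cases hj : j ≤ mu 0
    · have := congrFun heq (⟨i, by omega⟩, ⟨j, by omega⟩)
      exact congrArg Fin.val this
    · have hout : mu i ≤ j := le_trans (hmu.1 0 i (Nat.zero_le i)) (by omega)
      rw [T1.1.outside i j hout, T2.1.outside i j hout]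
  · have hout : mu i ≤ j := by rw [hR i (by omega)]; omega
    rw [T1.1.outside i j hout, T2.1.outside i j hout]

/-- the first row of an `SSYT` with content `δ` vanishing from `N` on is bounded by
`∑_{v<N} δ v` -/
lemma ssyt_row0_le {mu : ℕ → ℕ} {N : ℕ} (hmu : IsPartitionFn mu) (T : SSYT mu)
    (hcont : ∀ v, 1 ≤ v → T.content v = δ v) (hδ : ∀ v, N ≤ v → δ v = 0) :
    mu 0 ≤ ∑ v ∈ Finset.range N, δ v := by
  classical
  set U : Finset (ℕ × ℕ) :=
    (Finset.range N).biUnion (fun v => (ssyt_content_finite hmu T v).toFinset) with hU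
  have hsub : Finset.image (fun j => ((0 : ℕ), j)) (Finset.range (mu 0)) ⊆ U := by
    intro p hp
    obtain ⟨j, hj, rfl⟩ := Finset.mem_image.mp hp
    rw [Finset.mem_range] at hj
    apply Finset.mem_biUnion.mpr
    refine ⟨T.entry 0 j, Finset.mem_range.mpr (ssyt_entry_lt hmu T hcont hδ hj), ?_⟩
    rw [Set.Finite.mem_toFinset]
    exact ⟨hj, rfl⟩
  have h1 : mu 0 = (Finset.image (fun j => ((0 : ℕ), j)) (Finset.range (mu 0))).card := by
    rw [Finset.card_image_of_injective _ (fun a b hab => (Prod.mk.injEq _ _ _ _).mp hab |>.2),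
      Finset.card_range]
  have h2 : U.card ≤ ∑ v ∈ Finset.range N, δ v := by
    apply le_trans (Finset.card_biUnion_le)
    apply Finset.sum_le_sum
    intro v hv
    rw [← Set.ncard_eq_toFinset_card _ (ssyt_content_finite hmu T v)]
    by_cases hv1 : 1 ≤ v
    · rw [show {p : ℕ × ℕ | p.2 < mu p.1 ∧ T.entry p.1 p.2 = v}.ncard = T.content v from rfl,
        hcont v hv1]
    · have : {p : ℕ × ℕ | p.2 < mu p.1 ∧ T.entry p.1 p.2 = v} = ∅ := by
        ext ⟨i, j⟩
        simp only [Set.mem_setOf_eq, Set.mem_empty_iff_false, iff_false, not_and]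
        intro hj he
        have := T.pos i j hj
        omega
      rw [this]
      simp
  calc mu 0 = _ := h1
    _ ≤ U.card := Finset.card_le_card hsub
    _ ≤ _ := h2

end Fin

end
end Stmt16Aux

/-- The number of set-valued semistandard Young tableaux of shape `λ` and
content `δ` equals `Σ_{μ ⊇ λ} g_{λ,μ} · N_{μ,δ}`, where `N_{μ,δ}` is the number of ordinary
semistandard Young tableaux of shape `μ` and content `δ`, and `g_{λ,μ}` counts the
row-and-column-strict fillings of `μ/λ` whose row-`i` entries lie in `{1, …, i−1}`. -/
theorem stmt16 (lam : ℕ → ℕ) (hlam : IsPartitionFn lam) (δ : ℕ → ℕ)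
    (hδ : ∃ N : ℕ, ∀ v : ℕ, N ≤ v → δ v = 0) :
    Nat.card {F : SVYT lam // ∀ v : ℕ, 1 ≤ v → F.content v = δ v} =
      ∑ᶠ mu : {m : ℕ → ℕ // IsPartitionFn m ∧ ∀ i, lam i ≤ m i},
        Nat.card (LenartFilling lam mu.1) *
          Nat.card {T : SSYT mu.1 // ∀ v : ℕ, 1 ≤ v → T.content v = δ v} := by
  classical
  obtain ⟨N, hN⟩ := hδ
  have e : {F : SVYT lam // ∀ v : ℕ, 1 ≤ v → F.content v = δ v} ≃
      Σ mu : {m : ℕ → ℕ // IsPartitionFn m ∧ ∀ i, lam i ≤ m i},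
        (LenartFilling lam mu.1 ×
          {T : SSYT mu.1 // ∀ v : ℕ, 1 ≤ v → T.content v = δ v}) :=
    (Stmt16Aux.E1 hlam).trans ((Stmt16Aux.E2 hlam N).trans (Stmt16Aux.E3 hlam hN))
  rw [Nat.card_congr e]
  set Su := {m : ℕ → ℕ // IsPartitionFn m ∧ ∀ i, lam i ≤ m i} with hSu
  set G : Su → Type := fun mu => LenartFilling lam mu.1 ×
    {T : SSYT mu.1 // ∀ v : ℕ, 1 ≤ v → T.content v = δ v} with hG
  set f : Su → ℕ := fun mu => Nat.card (LenartFilling lam mu.1) *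
    Nat.card {T : SSYT mu.1 // ∀ v : ℕ, 1 ≤ v → T.content v = δ v} with hf
  have hGfin : ∀ mu : Su, Finite (G mu) := by
    intro mu
    haveI h1 := Stmt16Aux.lf_finite (lam := lam) mu.2.1
    haveI h2 := Stmt16Aux.ssytδ_finite (δ := δ) mu.2.1 hN
    infer_instance
  have hfG : ∀ mu, f mu = Nat.card (G mu) := fun mu => (Nat.card_prod _ _).symm
  set E := ∑ v ∈ Finset.range N, δ v with hE
  have key : ∀ mu : Su, f mu ≠ 0 → (∀ i, N ≤ i → mu.1 i = 0) ∧ ∀ i, mu.1 i ≤ E := by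
    intro mu hmu0
    have hTne : Nonempty {T : SSYT mu.1 // ∀ v : ℕ, 1 ≤ v → T.content v = δ v} := by
      by_contra hc
      rw [not_nonempty_iff] at hc
      rw [hf] at hmu0
      simp only [Nat.card_of_isEmpty, mul_zero] at hmu0
      exact hmu0 rfl
    obtain ⟨T⟩ := hTne
    constructor
    · intro i hi
      by_contra h0
      have := Stmt16Aux.ssyt_occupied mu.2.1 T.1 T.2 hN i (by omega)
      omega
    · intro i
      exact le_trans (mu.2.1.1 0 i (Nat.zero_le i))
        (Stmt16Aux.ssyt_row0_le mu.2.1 T.1 T.2 hN)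
  have hfin : (Function.support f).Finite := by
    have hinj : Function.Injective
        (fun mu : ↥(Function.support f) => (fun i : Fin N =>
          (⟨mu.1.1 i, by have := (key mu.1 mu.2).2 (i : ℕ); omega⟩ : Fin (E + 1)))) := by
      intro mu1 mu2 heq
      apply Subtype.ext
      apply Subtype.ext
      funext i
      by_cases hi : i < N
      · have := congrFun heq ⟨i, hi⟩
        exact congrArg Fin.val this
      · rw [(key mu1.1 mu1.2).1 i (by omega), (key mu2.1 mu2.2).1 i (by omega)]
    have : Finite ↥(Function.support f) := Finite.of_injective _ hinj
    exact Set.finite_coe_iff.mp this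
  have hsum : ∑ᶠ mu : Su, Nat.card (LenartFilling lam mu.1) *
      Nat.card {T : SSYT mu.1 // ∀ v : ℕ, 1 ≤ v → T.content v = δ v}
      = ∑ mu ∈ hfin.toFinset, f mu := finsum_eq_sum f hfin
  rw [hsum]
  have e2 : (Σ mu : Su, G mu) ≃ Σ mu : ↥hfin.toFinset, G mu.1 :=
    { toFun := fun p => ⟨⟨p.1, by
        rw [Set.Finite.mem_toFinset, Function.mem_support, hfG]
        have h1 : Nonempty (G p.1) := ⟨p.2⟩
        have h2 := hGfin p.1
        exact Nat.card_ne_zero.mpr ⟨h1, h2⟩⟩, p.2⟩,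
      invFun := fun p => ⟨p.1.1, p.2⟩,
      left_inv := fun ⟨mu, x⟩ => rfl,
      right_inv := fun ⟨⟨mu, h⟩, x⟩ => rfl }
  rw [Nat.card_congr e2]
  haveI hFT : ∀ mu : ↥hfin.toFinset, Fintype (G mu.1) := fun mu => @Fintype.ofFinite _ (hGfin mu.1)
  rw [Nat.card_eq_fintype_card, Fintype.card_sigma]
  rw [← Finset.sum_coe_sort hfin.toFinset f]
  apply Finset.sum_congr rfl
  intro x _
  rw [hfG, @Nat.card_eq_fintype_card _ (hFT x)]
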